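/- arXiv:0912.5090 — 7 statements merged into one kernel-verified Lean document; each statement's English description precedes it below -/
import Mathlib

section
/- Let Γ be a nonempty finite connected trivalent flag graph with first Betti number g, and let M be an n-dimensional ℂ-vector space. Then the ℂ-vector space of compatible numberings of Γ with values in M has dimension exactly n·g. -/
open Finset

/-- The submodule of compatible numberings of a flag graph
(vertices `V`, flags `F`, vertex map `π`, bounded flags `B`, involution `ι`)
with values in an `R`-module `M`: functions `f : F → M` vanishing on unbounded flags,
summing to zero over the flags at each vertex, and satisfying `f x + f (ι x) = 0`
for every bounded flag `x`. -/
def compatibleNumberings (R : Type) [CommRing R] {V F : Type} [Fintype F] [DecidableEq V]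
    (π : F → V) (B : Finset F) (ι : F → F)
    (M : Type) [AddCommGroup M] [Module R M] : Submodule R (F → M) where
  carrier := {f | (∀ x, x ∉ B → f x = 0) ∧
    (∀ v : V, ∑ x ∈ Finset.univ.filter (fun y => π y = v), f x = 0) ∧
    (∀ x ∈ B, f x + f (ι x) = 0)}
  add_mem' := by
    rintro f g ⟨hf1, hf2, hf3⟩ ⟨hg1, hg2, hg3⟩
    refine ⟨fun x hx => ?_, fun v => ?_, fun x hx => ?_⟩
    · simp [Pi.add_apply, hf1 x hx, hg1 x hx]
    · simp only [Pi.add_apply, Finset.sum_add_distrib, hf2 v, hg2 v, add_zero]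
    · have h : f x + g x + (f (ι x) + g (ι x)) = f x + f (ι x) + (g x + g (ι x)) := by abel
      simp only [Pi.add_apply]
      rw [h, hf3 x hx, hg3 x hx, add_zero]
  zero_mem' := by
    refine ⟨fun x _ => rfl, fun v => ?_, fun x _ => by simp⟩
    simp
  smul_mem' := by
    rintro c f ⟨hf1, hf2, hf3⟩
    refine ⟨fun x hx => ?_, fun v => ?_, fun x hx => ?_⟩
    · simp [Pi.smul_apply, hf1 x hx]
    · simp only [Pi.smul_apply, ← Finset.smul_sum, hf2 v, smul_zero]
    · simp only [Pi.smul_apply, ← smul_add, hf3 x hx, smul_zero]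

/-- The underlying simple graph of a flag graph: vertices `v, w` are adjacent if they are
distinct and joined by a bounded edge `{x, ι x}`. -/
def flagGraph {V F : Type} (π : F → V) (B : Finset F) (ι : F → F) : SimpleGraph V :=
  SimpleGraph.fromRel (fun v w => ∃ x ∈ B, π x = v ∧ π (ι x) = w)

namespace FlagAux

variable {V F : Type} [Fintype V] [Fintype F] [DecidableEq V] [DecidableEq F]
variable (π : F → V) (B : Finset F) (ι : F → F)
variable (M : Type) [AddCommGroup M] [Module ℂ M]

/-- antisymmetric functions supported on `B`. -/
def Wsub : Submodule ℂ (F → M) where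
  carrier := {f | (∀ x, x ∉ B → f x = 0) ∧ (∀ x ∈ B, f x + f (ι x) = 0)}
  add_mem' := by
    rintro f g ⟨hf1, hf2⟩ ⟨hg1, hg2⟩
    refine ⟨fun x hx => by simp [hf1 x hx, hg1 x hx], fun x hx => ?_⟩
    have h : f x + g x + (f (ι x) + g (ι x)) = f x + f (ι x) + (g x + g (ι x)) := by abel
    simp only [Pi.add_apply]
    rw [h, hf2 x hx, hg2 x hx, add_zero]
  zero_mem' := ⟨fun x _ => rfl, fun x _ => by simp⟩
  smul_mem' := by
    rintro c f ⟨hf1, hf2⟩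
    refine ⟨fun x hx => by simp [hf1 x hx], fun x hx => ?_⟩
    simp only [Pi.smul_apply, ← smul_add, hf2 x hx, smul_zero]

/-- the vertex-sum map. -/
def Tmap : (F → M) →ₗ[ℂ] (V → M) where
  toFun f := fun v => ∑ x ∈ Finset.univ.filter (fun y => π y = v), f x
  map_add' f g := by funext v; simp [Finset.sum_add_distrib]
  map_smul' c f := by funext v; simp [Finset.smul_sum]

/-- the total-sum map. -/
def σmap : (V → M) →ₗ[ℂ] M where
  toFun h := ∑ v, h v
  map_add' f g := by simp [Finset.sum_add_distrib]
  map_smul' c f := by simp [Finset.smul_sum]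

lemma compat_eq :
    compatibleNumberings ℂ π B ι M = Wsub B ι M ⊓ LinearMap.ker (Tmap π M) := by
  ext f
  constructor
  · rintro ⟨h1, h2, h3⟩
    exact ⟨⟨h1, h3⟩, funext h2⟩
  · rintro ⟨⟨h1, h3⟩, h2⟩
    exact ⟨h1, fun v => congrFun h2 v, h3⟩


set_option linter.unusedSectionVars false

section Sset

variable (e : F ↪ ℕ)

/-- a choice of one flag from each bounded edge. -/
def Sset : Finset F := B.filter (fun x => e x < e (ι x))

lemma Sset_subset : Sset B ι e ⊆ B := Finset.filter_subset _ _

lemma mem_S_or (hιB : ∀ x ∈ B, ι x ∈ B) (hιinv : ∀ x ∈ B, ι (ι x) = x)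
    (hιne : ∀ x ∈ B, ι x ≠ x) {x : F} (hx : x ∈ B) :
    x ∈ Sset B ι e ∨ ι x ∈ Sset B ι e := by
  by_cases h : e x < e (ι x)
  · exact Or.inl (Finset.mem_filter.mpr ⟨hx, h⟩)
  · right
    refine Finset.mem_filter.mpr ⟨hιB x hx, ?_⟩
    rw [hιinv x hx]
    rcases lt_or_eq_of_le (not_lt.mp h) with h' | h'
    · exact h'
    · exact absurd (e.injective h') (hιne x hx)

lemma not_mem_S_iota (hιinv : ∀ x ∈ B, ι (ι x) = x) {x : F} (hx : x ∈ Sset B ι e) :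
    ι x ∉ Sset B ι e := by
  intro hx'
  have h1 := (Finset.mem_filter.mp hx).2
  have h2 := (Finset.mem_filter.mp hx').2
  rw [hιinv x (Sset_subset B ι e hx)] at h2
  exact absurd h1 (not_lt.mpr h2.le)

lemma card_B_eq (hιB : ∀ x ∈ B, ι x ∈ B) (hιinv : ∀ x ∈ B, ι (ι x) = x)
    (hιne : ∀ x ∈ B, ι x ≠ x) : B.card = 2 * (Sset B ι e).card := by
  have hSB := Sset_subset B ι e
  have hdisj : Disjoint (Sset B ι e) ((Sset B ι e).image ι) := by
    rw [Finset.disjoint_left]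
    intro a ha hb
    obtain ⟨b, hb', rfl⟩ := Finset.mem_image.mp hb
    exact not_mem_S_iota B ι e hιinv hb' ha
  have hcardim : ((Sset B ι e).image ι).card = (Sset B ι e).card := by
    refine Finset.card_image_of_injOn ?_
    intro a ha b hb hab
    have := congrArg ι hab
    rwa [hιinv a (hSB ha), hιinv b (hSB hb)] at this
  have hunion : Sset B ι e ∪ (Sset B ι e).image ι = B := by
    apply Finset.Subset.antisymm
    · refine Finset.union_subset hSB ?_
      intro a ha
      obtain ⟨b, hb, rfl⟩ := Finset.mem_image.mp ha
      exact hιB b (hSB hb)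
    · intro x hx
      rcases mem_S_or B ι e hιB hιinv hιne hx with h | h
      · exact Finset.mem_union_left _ h
      · exact Finset.mem_union_right _
          (Finset.mem_image.mpr ⟨ι x, h, hιinv x hx⟩)
  have hcu := Finset.card_union_of_disjoint hdisj
  rw [hcardim, hunion] at hcu
  omega

/-- restriction of an antisymmetric numbering to the chosen flags. -/
def resW : Wsub B ι M →ₗ[ℂ] (↥(Sset B ι e) → M) where
  toFun f := fun s => f.1 s.1
  map_add' _ _ := rfl
  map_smul' _ _ := rfl

lemma resW_bijective (hιB : ∀ x ∈ B, ι x ∈ B) (hιinv : ∀ x ∈ B, ι (ι x) = x)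
    (hιne : ∀ x ∈ B, ι x ≠ x) : Function.Bijective (resW B ι M e) := by
  constructor
  · intro f g hfg
    ext y
    obtain ⟨h0f, haf⟩ := f.2
    obtain ⟨h0g, hag⟩ := g.2
    by_cases hy : y ∈ B
    · rcases mem_S_or B ι e hιB hιinv hιne hy with hS | hS
      · exact congrFun hfg ⟨y, hS⟩
      · have h1 : f.1 (ι y) = g.1 (ι y) := congrFun hfg ⟨ι y, hS⟩
        show f.1 y = g.1 y
        rw [eq_neg_of_add_eq_zero_left (haf y hy), h1,
          neg_eq_of_add_eq_zero_left (hag y hy)]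
    · rw [show f.1 y = 0 from h0f y hy, show g.1 y = 0 from h0g y hy]
  · intro h
    classical
    set f : F → M := fun y =>
      if hy : y ∈ Sset B ι e then h ⟨y, hy⟩
      else if hy2 : y ∈ B ∧ ι y ∈ Sset B ι e then -h ⟨ι y, hy2.2⟩ else 0 with hf
    have hSB := Sset_subset B ι e
    have hfW : f ∈ Wsub B ι M := by
      constructor
      · intro y hy
        have h1 : y ∉ Sset B ι e := fun hc => hy (hSB hc)
        have h2 : ¬(y ∈ B ∧ ι y ∈ Sset B ι e) := fun hc => hy hc.1
        simp only [hf, dif_neg h1, dif_neg h2]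
      · intro y hy
        by_cases h1 : y ∈ Sset B ι e
        · have h2 : ι y ∉ Sset B ι e := not_mem_S_iota B ι e hιinv h1
          have h3 : ι y ∈ B ∧ ι (ι y) ∈ Sset B ι e := by
            refine ⟨hιB y hy, ?_⟩
            rwa [hιinv y hy]
          have h4 : f (ι y) = -h ⟨ι (ι y), h3.2⟩ := by
            simp only [hf, dif_neg h2, dif_pos h3]
          have h5 : f y = h ⟨y, h1⟩ := by simp only [hf, dif_pos h1]
          have h6 : (⟨ι (ι y), h3.2⟩ : ↥(Sset B ι e)) = ⟨y, h1⟩ :=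
            Subtype.ext (hιinv y hy)
          rw [h4, h5, h6]
          abel
        · have h2 : ι y ∈ Sset B ι e := by
            rcases mem_S_or B ι e hιB hιinv hιne hy with h' | h'
            · exact absurd h' h1
            · exact h'
          have h3 : f y = -h ⟨ι y, h2⟩ := by
            simp only [hf, dif_neg h1, dif_pos (And.intro hy h2)]
          have h4 : f (ι y) = h ⟨ι y, h2⟩ := by
            simp only [hf, dif_pos h2]
          rw [h3, h4]
          abel
    refine ⟨⟨f, hfW⟩, ?_⟩
    funext s
    show f s.1 = h s
    simp only [hf, dif_pos s.2]

lemma finrank_Wsub [FiniteDimensional ℂ M] (hιB : ∀ x ∈ B, ι x ∈ B)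
    (hιinv : ∀ x ∈ B, ι (ι x) = x) (hιne : ∀ x ∈ B, ι x ≠ x) :
    Module.finrank ℂ ↥(Wsub B ι M) = (Sset B ι e).card * Module.finrank ℂ M := by
  have equiv := LinearEquiv.ofBijective (resW B ι M e)
    (resW_bijective B ι M e hιB hιinv hιne)
  rw [equiv.finrank_eq, Module.finrank_pi_fintype, Finset.sum_const,
    Finset.card_univ, Fintype.card_coe, smul_eq_mul]

end Sset


section Range

lemma single_sub_mem (hιB : ∀ x ∈ B, ι x ∈ B) (hιinv : ∀ x ∈ B, ι (ι x) = x)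
    (hιne : ∀ x ∈ B, ι x ≠ x) {v w : V} {x : F} (hx : x ∈ B)
    (hv : π x = v) (hw : π (ι x) = w) (m : M) :
    Pi.single v m - Pi.single w m ∈
      LinearMap.range ((Tmap π M).domRestrict (Wsub B ι M)) := by
  have hxne : ι x ≠ x := hιne x hx
  set f : F → M := fun y => if y = x then m else if y = ι x then -m else 0 with hfdef
  have hfW : f ∈ Wsub B ι M := by
    constructor
    · intro y hy
      have h1 : y ≠ x := fun hc => hy (hc ▸ hx)
      have h2 : y ≠ ι x := fun hc => hy (hc ▸ hιB x hx)
      simp only [hfdef, if_neg h1, if_neg h2]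
    · intro y hy
      by_cases h1 : y = x
      · subst h1
        simp only [hfdef, if_pos rfl, if_neg hxne, if_pos rfl]
        simp
      · by_cases h2 : y = ι x
        · subst h2
          rw [hιinv x hx]
          simp only [hfdef, if_neg hxne, if_pos rfl]
          simp
        · have h3 : ι y ≠ x := fun hc => h2 (by rw [← hc, hιinv y hy])
          have h4 : ι y ≠ ι x := fun hc => h1 (by
            have := congrArg ι hc
            rwa [hιinv y hy, hιinv x hx] at this)
          simp only [hfdef, if_neg h1, if_neg h2, if_neg h3, if_neg h4, add_zero]
  refine ⟨⟨f, hfW⟩, ?_⟩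
  show Tmap π M f = _
  funext u
  show ∑ z ∈ Finset.univ.filter (fun y => π y = u), f z = _
  have hsplit : ∀ z, f z = (if z = x then m else 0) + (if z = ι x then -m else 0) := by
    intro z
    by_cases h1 : z = x
    · have h2 : ¬ (x = ι x) := fun hc => hxne hc.symm
      simp [hfdef, h1, h2]
    · by_cases h2 : z = ι x
      · simp [hfdef, h2, hxne]
      · simp [hfdef, h1, h2]
  rw [Finset.sum_congr rfl (fun z _ => hsplit z), Finset.sum_add_distrib,
    Finset.sum_ite_eq', Finset.sum_ite_eq']
  simp only [Finset.mem_filter, Finset.mem_univ, true_and, hv, hw,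
    Pi.sub_apply, Pi.single_apply]
  by_cases h1 : v = u <;> by_cases h2 : w = u <;>
    simp [h1, h2, eq_comm (a := u), sub_eq_add_neg]

lemma reachable_mem (hιB : ∀ x ∈ B, ι x ∈ B) (hιinv : ∀ x ∈ B, ι (ι x) = x)
    (hιne : ∀ x ∈ B, ι x ≠ x) {v w : V}
    (hr : (flagGraph π B ι).Reachable v w) (m : M) :
    Pi.single v m - Pi.single w m ∈
      LinearMap.range ((Tmap π M).domRestrict (Wsub B ι M)) := by
  obtain ⟨p⟩ := hr
  induction p with
  | nil => simpa using zero_mem _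
  | @cons a b c hadj p ih =>
    have h1 : Pi.single a m - Pi.single b m ∈
        LinearMap.range ((Tmap π M).domRestrict (Wsub B ι M)) := by
      obtain ⟨hne, hrel | hrel⟩ := (SimpleGraph.fromRel_adj _ a b).mp hadj
      · obtain ⟨x, hx, hpv, hpw⟩ := hrel
        exact single_sub_mem π B ι M hιB hιinv hιne hx hpv hpw m
      · obtain ⟨x, hx, hpv, hpw⟩ := hrel
        have h := single_sub_mem π B ι M hιB hιinv hιne hx hpv hpw (-m)
        have heq : (Pi.single a m : V → M) - Pi.single b m =
            (Pi.single b (-m) : V → M) - Pi.single a (-m) := by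
          rw [Pi.single_neg, Pi.single_neg]
          abel
        rw [heq]
        exact h
    have heq : (Pi.single a m : V → M) - Pi.single c m =
        ((Pi.single a m : V → M) - Pi.single b m) +
          ((Pi.single b m : V → M) - Pi.single c m) := by abel
    rw [heq]
    exact add_mem h1 ih

lemma range_domRestrict_eq [Nonempty V] (hιB : ∀ x ∈ B, ι x ∈ B)
    (hιinv : ∀ x ∈ B, ι (ι x) = x) (hιne : ∀ x ∈ B, ι x ≠ x)
    (hconn : (flagGraph π B ι).Connected) :
    LinearMap.range ((Tmap π M).domRestrict (Wsub B ι M)) =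
      LinearMap.ker (σmap (V := V) M) := by
  apply le_antisymm
  · rintro h ⟨⟨f, hf0, hfa⟩, rfl⟩
    show σmap (V := V) M (Tmap π M f) = 0
    show ∑ v : V, ∑ x ∈ Finset.univ.filter (fun y => π y = v), f x = 0
    rw [Finset.sum_fiberwise]
    have hB : ∑ x, f x = ∑ x ∈ B, f x :=
      (Finset.sum_subset (Finset.subset_univ B) (fun x _ hx => hf0 x hx)).symm
    rw [hB]
    have h1 : ∑ x ∈ B, (f x + f (ι x)) = 0 := Finset.sum_eq_zero hfa
    have h2 : ∑ x ∈ B, f (ι x) = ∑ x ∈ B, f x :=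
      Finset.sum_nbij' ι ι hιB hιB hιinv hιinv (fun _ _ => rfl)
    rw [Finset.sum_add_distrib, h2] at h1
    have h3 : (2 : ℂ) • ∑ x ∈ B, f x = 0 := by rw [two_smul]; exact h1
    rcases smul_eq_zero.mp h3 with h | h
    · exact absurd h two_ne_zero
    · exact h
  · intro h hh
    have hh' : ∑ v, h v = 0 := hh
    have v₀ : V := Classical.arbitrary V
    have hrepr : h = ∑ v, ((Pi.single v (h v) : V → M) - Pi.single v₀ (h v)) := by
      have h1 : ∑ v, (Pi.single v (h v) : V → M) = h := by
        funext u
        rw [Finset.sum_apply]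
        rw [Finset.sum_pi_single]
        simp
      have h2 : ∑ v : V, (Pi.single v₀ (h v) : V → M) = 0 := by
        funext u
        rw [Finset.sum_apply]
        by_cases hu : u = v₀ <;> simp [Pi.single_apply, hu, hh']
      rw [Finset.sum_sub_distrib, h1, h2, sub_zero]
    rw [hrepr]
    exact sum_mem fun v _ =>
      reachable_mem π B ι M hιB hιinv hιne (hconn.preconnected v v₀) (h v)

end Range

end FlagAux

/-- For a nonempty finite connected trivalent flag graph `Γ` with first Betti number `g`
and an `n`-dimensional `ℂ`-vector space `M`, the space of compatible numberings of `Γ`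
with values in `M` has dimension exactly `n * g`. -/
theorem dim_compatibleNumberings_module
    {V F : Type} [Fintype V] [Fintype F] [DecidableEq V] [DecidableEq F] [Nonempty V]
    (π : F → V) (B : Finset F) (ι : F → F) (g n : ℕ)
    (htri : ∀ v : V, (Finset.univ.filter (fun x => π x = v)).card = 3)
    (hιB : ∀ x ∈ B, ι x ∈ B)
    (hιinv : ∀ x ∈ B, ι (ι x) = x)
    (hιne : ∀ x ∈ B, ι x ≠ x)
    (hconn : (flagGraph π B ι).Connected)
    (hbetti : B.card + 2 = 2 * Fintype.card V + 2 * g)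
    (M : Type) [AddCommGroup M] [Module ℂ M] [FiniteDimensional ℂ M]
    (hM : Module.finrank ℂ M = n) :
    Module.finrank ℂ ↥(compatibleNumberings ℂ π B ι M) = n * g := by
  classical
  rw [FlagAux.compat_eq π B ι M]
  let e : F ↪ ℕ := (Fintype.equivFin F).toEmbedding.trans Fin.valEmbedding
  have hkerEq : LinearMap.ker ((FlagAux.Tmap π M).domRestrict (FlagAux.Wsub B ι M)) =
      Submodule.comap (FlagAux.Wsub B ι M).subtype
        (FlagAux.Wsub B ι M ⊓ LinearMap.ker (FlagAux.Tmap π M)) := by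
    rw [LinearMap.ker_domRestrict, Submodule.comap_inf, Submodule.comap_subtype_self,
      top_inf_eq]
  have hfr1 : Module.finrank ℂ ↥(FlagAux.Wsub B ι M ⊓ LinearMap.ker (FlagAux.Tmap π M)) =
      Module.finrank ℂ
        ↥(LinearMap.ker ((FlagAux.Tmap π M).domRestrict (FlagAux.Wsub B ι M))) := by
    rw [hkerEq]
    exact (Submodule.comapSubtypeEquivOfLe inf_le_left).finrank_eq.symm
  have hrank := LinearMap.finrank_range_add_finrank_ker
    ((FlagAux.Tmap π M).domRestrict (FlagAux.Wsub B ι M))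
  rw [FlagAux.range_domRestrict_eq π B ι M hιB hιinv hιne hconn,
    FlagAux.finrank_Wsub B ι M e hιB hιinv hιne, hM] at hrank
  have hσsurj : LinearMap.range (FlagAux.σmap (V := V) M) = ⊤ := by
    rw [LinearMap.range_eq_top]
    intro m
    have v₀ : V := Classical.arbitrary V
    refine ⟨Pi.single v₀ m, ?_⟩
    show ∑ v, Pi.single v₀ m v = m
    rw [Finset.sum_pi_single']
    simp
  have hrank2 := LinearMap.finrank_range_add_finrank_ker (FlagAux.σmap (V := V) M)
  rw [hσsurj, finrank_top, hM, Module.finrank_pi_fintype, Finset.sum_const,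
    Finset.card_univ, smul_eq_mul, hM] at hrank2
  have hcard := FlagAux.card_B_eq B ι e hιB hιinv hιne
  have hSg : (FlagAux.Sset B ι e).card + 1 = Fintype.card V + g := by omega
  have hexp : (FlagAux.Sset B ι e).card * n + n = Fintype.card V * n + g * n := by
    have h := congrArg (· * n) hSg
    simpa [add_mul, one_mul] using h
  rw [hfr1]
  set K := Module.finrank ℂ
    ↥(LinearMap.ker ((FlagAux.Tmap π M).domRestrict (FlagAux.Wsub B ι M))) with hK
  set R := Module.finrank ℂ ↥(LinearMap.ker (FlagAux.σmap (V := V) M)) with hR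
  have hfinal : K + (n + R) = n * g + (n + R) := by
    calc K + (n + R) = (R + K) + n := by ring
      _ = (FlagAux.Sset B ι e).card * n + n := by rw [hrank]
      _ = Fintype.card V * n + g * n := hexp
      _ = (n + R) + n * g := by rw [← hrank2]; ring
      _ = n * g + (n + R) := by ring
  exact Nat.add_right_cancel hfinal
end

section
/- Let Γ be a nonempty finite connected trivalent flag graph whose first Betti number is 0 (i.e., whose underlying graph is a tree). Then for every ℂ-vector space M, the only compatible numbering of Γ with values in M is the identically zero function. -/
open Finset

private lemma aux_conn_delete {V : Type} {G : SimpleGraph V} {x y : V} (h : G.Connected)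
    (hr : (G \ SimpleGraph.fromEdgeSet {s(x, y)}).Reachable x y) :
    (G \ SimpleGraph.fromEdgeSet {s(x, y)}).Connected := by
  have step : ∀ a b : V, G.Adj a b → (G \ SimpleGraph.fromEdgeSet {s(x, y)}).Reachable a b := by
    intro a b hab
    by_cases he : s(a, b) = s(x, y)
    · rw [Sym2.eq_iff] at he
      rcases he with ⟨rfl, rfl⟩ | ⟨rfl, rfl⟩
      · exact hr
      · exact hr.symm
    · refine SimpleGraph.Adj.reachable ?_
      rw [SimpleGraph.sdiff_adj, SimpleGraph.fromEdgeSet_adj]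
      exact ⟨hab, fun hf => he hf.1⟩
  haveI := h.nonempty
  refine SimpleGraph.Connected.mk ?_
  intro u v
  have huv := h.preconnected u v
  rw [SimpleGraph.reachable_iff_reflTransGen] at huv
  induction huv with
  | refl => exact SimpleGraph.Reachable.refl u
  | tail _ hadj ih => exact ih.trans (step _ _ hadj)

private lemma aux_card_le : ∀ (n : ℕ) {V : Type} [Fintype V] (G : SimpleGraph V)
    [Fintype G.edgeSet], G.Connected → G.edgeFinset.card = n → Fintype.card V ≤ n + 1 := by
  intro n
  induction n using Nat.strong_induction_on with
  | _ n ih =>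
    intro V _ G _ hc hcard
    classical
    by_cases hac : G.IsAcyclic
    · have := SimpleGraph.IsTree.card_edgeFinset (G := G) ⟨hc, hac⟩
      omega
    · rw [SimpleGraph.isAcyclic_iff_forall_edge_isBridge] at hac
      push_neg at hac
      obtain ⟨e, he, hbr⟩ := hac
      induction e using Sym2.ind with
      | _ x y =>
        rw [SimpleGraph.isBridge_iff] at hbr
        push_neg at hbr
        have hadj : G.Adj x y := he
        have hr := hbr
        haveI : Fintype (G \ SimpleGraph.fromEdgeSet {s(x, y)}).edgeSet := Fintype.ofFinite _
        have hconn' := aux_conn_delete hc hr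
        have hes : (G \ SimpleGraph.fromEdgeSet {s(x, y)}).edgeFinset
            = G.edgeFinset.erase s(x, y) := by
          ext e'
          simp only [SimpleGraph.mem_edgeFinset, Finset.mem_erase, SimpleGraph.edgeSet_sdiff,
            SimpleGraph.edgeSet_fromEdgeSet, SimpleGraph.edgeSet_sdiff_sdiff_isDiag,
            Set.mem_diff, Set.mem_singleton_iff]
          tauto
        have hmem : s(x, y) ∈ G.edgeFinset := SimpleGraph.mem_edgeFinset.mpr he
        have hpos : 1 ≤ n := by rw [← hcard]; exact Finset.card_pos.mpr ⟨_, hmem⟩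
        have hcard' : (G \ SimpleGraph.fromEdgeSet {s(x, y)}).edgeFinset.card = n - 1 := by
          rw [hes, Finset.card_erase_of_mem hmem, hcard]
        have := ih (n - 1) (by omega) _ hconn' hcard'
        omega


/-- For a nonempty finite connected trivalent flag graph `Γ` of first Betti number `0`
(i.e. whose underlying graph is a tree), the only compatible numbering of `Γ` with values
in any `ℂ`-vector space is the zero function. -/
theorem compatibleNumberings_eq_zero_of_tree
    {V F : Type} [Fintype V] [Fintype F] [DecidableEq V] [DecidableEq F] [Nonempty V]
    (π : F → V) (B : Finset F) (ι : F → F)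
    (htri : ∀ v : V, (Finset.univ.filter (fun x => π x = v)).card = 3)
    (hιB : ∀ x ∈ B, ι x ∈ B)
    (hιinv : ∀ x ∈ B, ι (ι x) = x)
    (hιne : ∀ x ∈ B, ι x ≠ x)
    (hconn : (flagGraph π B ι).Connected)
    (hbetti : B.card + 2 = 2 * Fintype.card V + 2 * 0) :
    ∀ (M : Type) [AddCommGroup M] [Module ℂ M],
      ∀ f ∈ compatibleNumberings ℂ π B ι M, f = 0 := by
  classical
  set G := flagGraph π B ι with hGdef
  set q : F → Sym2 V := fun x => s(π x, π (ι x)) with hqdef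
  haveI : Fintype G.edgeSet := Fintype.ofFinite _
  -- basic facts about q
  have hqι : ∀ x ∈ B, q (ι x) = q x := by
    intro x hx
    simp only [hqdef, hιinv x hx]
    exact Sym2.eq_swap
  have hfiber_two : ∀ e ∈ B.image q, 2 ≤ (B.filter (fun x => q x = e)).card := by
    intro e he
    obtain ⟨x, hx, rfl⟩ := Finset.mem_image.mp he
    have hsub : ({x, ι x} : Finset F) ⊆ B.filter (fun y => q y = q x) := by
      intro y hy
      rcases Finset.mem_insert.mp hy with rfl | hy
      · exact Finset.mem_filter.mpr ⟨hx, rfl⟩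
      · rw [Finset.mem_singleton] at hy; subst hy
        exact Finset.mem_filter.mpr ⟨hιB x hx, hqι x hx⟩
    calc 2 = ({x, ι x} : Finset F).card := (Finset.card_pair (Ne.symm (hιne x hx))).symm
      _ ≤ _ := Finset.card_le_card hsub
  have hBsum : B.card = ∑ e ∈ B.image q, (B.filter (fun x => q x = e)).card :=
    Finset.card_eq_sum_card_image q B
  have himg_ge : 2 * (B.image q).card ≤ B.card := by
    rw [hBsum]
    calc 2 * (B.image q).card = ∑ _e ∈ B.image q, 2 := by rw [Finset.sum_const, smul_eq_mul, mul_comm]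
      _ ≤ _ := Finset.sum_le_sum hfiber_two
  have hedge_sub : G.edgeFinset ⊆ B.image q := by
    intro e he
    rw [SimpleGraph.mem_edgeFinset] at he
    induction e using Sym2.ind with
    | _ v w =>
      rw [SimpleGraph.mem_edgeSet, hGdef, flagGraph, SimpleGraph.fromRel_adj] at he
      obtain ⟨hne, ⟨x, hx, h1, h2⟩ | ⟨x, hx, h1, h2⟩⟩ := he
      · exact Finset.mem_image.mpr ⟨x, hx, by rw [hqdef]; simp only [h1, h2]⟩
      · exact Finset.mem_image.mpr ⟨x, hx, by rw [hqdef]; simp only [h1, h2]; exact Sym2.eq_swap⟩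
  have hcardle := aux_card_le G.edgeFinset.card G hconn rfl
  have hEI : G.edgeFinset.card ≤ (B.image q).card := Finset.card_le_card hedge_sub
  -- all the counting collapses
  have himg_card : (B.image q).card = G.edgeFinset.card := by omega
  have hedge_eq : G.edgeFinset = B.image q :=
    Finset.eq_of_subset_of_card_le hedge_sub (le_of_eq himg_card)
  have hBcard : B.card = 2 * (B.image q).card := by omega
  have hfib_eq : ∀ e ∈ B.image q, (B.filter (fun x => q x = e)).card = 2 := by
    by_contra hcon
    push_neg at hcon
    obtain ⟨e, he, hne⟩ := hcon
    have hlt : ∑ _e ∈ B.image q, 2 < ∑ e ∈ B.image q, (B.filter (fun x => q x = e)).card :=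
      Finset.sum_lt_sum hfiber_two ⟨e, he, lt_of_le_of_ne (hfiber_two e he) (Ne.symm hne)⟩
    rw [Finset.sum_const, smul_eq_mul, ← hBsum] at hlt
    omega
  have hfiber : ∀ x ∈ B, B.filter (fun y => q y = q x) = {x, ι x} := by
    intro x hx
    have hsub : ({x, ι x} : Finset F) ⊆ B.filter (fun y => q y = q x) := by
      intro y hy
      rcases Finset.mem_insert.mp hy with rfl | hy
      · exact Finset.mem_filter.mpr ⟨hx, rfl⟩
      · rw [Finset.mem_singleton] at hy; subst hy
        exact Finset.mem_filter.mpr ⟨hιB x hx, hqι x hx⟩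
    refine (Finset.eq_of_subset_of_card_le hsub ?_).symm
    rw [hfib_eq (q x) (Finset.mem_image_of_mem q hx), Finset.card_pair (Ne.symm (hιne x hx))]
  have hqedge : ∀ x ∈ B, q x ∈ G.edgeSet := by
    intro x hx
    rw [← SimpleGraph.mem_edgeFinset, hedge_eq]
    exact Finset.mem_image_of_mem q hx
  have hnoloop : ∀ x ∈ B, π x ≠ π (ι x) := by
    intro x hx hcon
    have := SimpleGraph.not_isDiag_of_mem_edgeSet G (hqedge x hx)
    rw [hqdef] at this
    exact this (Sym2.mk_isDiag_iff.mpr hcon)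
  -- G is a tree
  have hacyc : G.IsAcyclic := by
    by_contra hac
    rw [SimpleGraph.isAcyclic_iff_forall_edge_isBridge] at hac
    push_neg at hac
    obtain ⟨e, he, hbr⟩ := hac
    induction e using Sym2.ind with
    | _ x y =>
      rw [SimpleGraph.isBridge_iff] at hbr
      push_neg at hbr
      have hadj : G.Adj x y := he
      have hr := hbr
      haveI : Fintype (G \ SimpleGraph.fromEdgeSet {s(x, y)}).edgeSet := Fintype.ofFinite _
      have hconn' := aux_conn_delete hconn hr
      have hes : (G \ SimpleGraph.fromEdgeSet {s(x, y)}).edgeFinset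
          = G.edgeFinset.erase s(x, y) := by
        ext e'
        simp only [SimpleGraph.mem_edgeFinset, Finset.mem_erase, SimpleGraph.edgeSet_sdiff,
          SimpleGraph.edgeSet_fromEdgeSet, SimpleGraph.edgeSet_sdiff_sdiff_isDiag,
          Set.mem_diff, Set.mem_singleton_iff]
        tauto
      have hmem : s(x, y) ∈ G.edgeFinset := SimpleGraph.mem_edgeFinset.mpr he
      have hne : Fintype.card V ≤ G.edgeFinset.card :=
        by
          have h1 := aux_card_le (G.edgeFinset.card - 1) _ hconn'
            (by rw [hes, Finset.card_erase_of_mem hmem])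
          have h2 : 1 ≤ G.edgeFinset.card := Finset.card_pos.mpr ⟨_, hmem⟩
          omega
      omega
  have hbridge : ∀ x ∈ B,
      ¬ (G \ SimpleGraph.fromEdgeSet {q x}).Reachable (π x) (π (ι x)) := by
    intro x hx
    have := (SimpleGraph.isAcyclic_iff_forall_edge_isBridge.mp hacyc) (hqedge x hx)
    rw [hqdef] at this
    exact SimpleGraph.isBridge_iff.mp this
  -- the main argument
  intro M _ _ f hf
  obtain ⟨h0, hsum, hpair⟩ := hf
  have key : ∀ x ∈ B, f x = 0 := by
    intro x₀ hx₀
    set S : Finset V :=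
      Finset.univ.filter (fun v => (G \ SimpleGraph.fromEdgeSet {q x₀}).Reachable (π x₀) v)
      with hSdef
    have hv₀S : π x₀ ∈ S := by
      rw [hSdef]
      simp only [Finset.mem_filter, Finset.mem_univ, true_and]
      exact SimpleGraph.Reachable.refl _
    have hw₀S : π (ι x₀) ∉ S := by
      rw [hSdef]
      simp only [Finset.mem_filter, Finset.mem_univ, true_and]
      exact hbridge x₀ hx₀
    set T : Finset F := Finset.univ.filter (fun x => π x ∈ S) with hTdef
    have hTsum : ∑ x ∈ T, f x = 0 := by
      have hmaps : ∀ x ∈ T, π x ∈ S := by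
        intro x hx; rw [hTdef] at hx
        exact (Finset.mem_filter.mp hx).2
      rw [← Finset.sum_fiberwise_of_maps_to hmaps f]
      refine Finset.sum_eq_zero ?_
      intro v hv
      have : T.filter (fun x => π x = v) = Finset.univ.filter (fun y => π y = v) := by
        ext x
        rw [hTdef]
        simp only [Finset.mem_filter, Finset.mem_univ, true_and, Finset.filter_filter]
        constructor
        · exact fun h => h.2
        · intro h; rw [h]; exact ⟨hv, rfl⟩
      rw [this]
      exact hsum v
    rw [← Finset.sum_filter_add_sum_filter_not T (fun x => x ∈ B)] at hTsum
    have hub : ∑ x ∈ T.filter (fun x => x ∉ B), f x = 0 :=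
      Finset.sum_eq_zero fun x hx => h0 x (Finset.mem_filter.mp hx).2
    rw [hub, add_zero] at hTsum
    set TB : Finset F := T.filter (fun x => x ∈ B) with hTBdef
    rw [← Finset.sum_filter_add_sum_filter_not TB (fun x => π (ι x) ∈ S)] at hTsum
    have hTBmem : ∀ x ∈ TB, x ∈ B ∧ π x ∈ S := by
      intro x hx
      simp only [hTBdef, hTdef, Finset.mem_filter, Finset.mem_univ, true_and] at hx
      exact ⟨hx.2, hx.1⟩
    have hA : ∑ x ∈ TB.filter (fun x => π (ι x) ∈ S), f x = 0 := by
      refine Finset.sum_involution (fun x _ => ι x) ?_ ?_ ?_ ?_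
      · intro x hx
        exact hpair x (hTBmem x (Finset.mem_filter.mp hx).1).1
      · intro x hx _
        exact hιne x (hTBmem x (Finset.mem_filter.mp hx).1).1
      · intro x hx
        obtain ⟨hxTB, hxι⟩ := Finset.mem_filter.mp hx
        obtain ⟨hxB, hxS⟩ := hTBmem x hxTB
        refine Finset.mem_filter.mpr ⟨?_, ?_⟩
        · simp only [hTBdef, hTdef, Finset.mem_filter, Finset.mem_univ, true_and]
          exact ⟨hxι, hιB x hxB⟩
        · rw [hιinv x hxB]; exact hxS
      · intro x hx
        exact hιinv x (hTBmem x (Finset.mem_filter.mp hx).1).1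
    rw [hA, zero_add] at hTsum
    have hC : TB.filter (fun x => π (ι x) ∉ S) = {x₀} := by
      ext y
      simp only [Finset.mem_singleton]
      constructor
      · intro hy
        obtain ⟨hyTB, hyι⟩ := Finset.mem_filter.mp hy
        obtain ⟨hyB, hyS⟩ := hTBmem y hyTB
        -- show q y = q x₀
        have hqy : q y = q x₀ := by
          by_contra hqne
          apply hyι
          have hadj : (G \ SimpleGraph.fromEdgeSet {q x₀}).Adj (π y) (π (ι y)) := by
            rw [SimpleGraph.sdiff_adj, SimpleGraph.fromEdgeSet_adj]
            refine ⟨?_, fun hcon => hqne (by rw [hqdef]; exact hcon.1)⟩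
            rw [hGdef, flagGraph, SimpleGraph.fromRel_adj]
            exact ⟨hnoloop y hyB, Or.inl ⟨y, hyB, rfl, rfl⟩⟩
          rw [hSdef]
          simp only [Finset.mem_filter, Finset.mem_univ, true_and]
          have hreach : (G \ SimpleGraph.fromEdgeSet {q x₀}).Reachable (π x₀) (π y) := by
            rw [hSdef] at hyS
            simpa using hyS
          exact hreach.trans hadj.reachable
        have hymem : y ∈ B.filter (fun z => q z = q x₀) := Finset.mem_filter.mpr ⟨hyB, hqy⟩
        rw [hfiber x₀ hx₀] at hymem
        rcases Finset.mem_insert.mp hymem with rfl | hy2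
        · rfl
        · rw [Finset.mem_singleton] at hy2
          subst hy2
          exact absurd hyS hw₀S
      · rintro rfl
        refine Finset.mem_filter.mpr ⟨?_, hw₀S⟩
        simp only [hTBdef, hTdef, Finset.mem_filter, Finset.mem_univ, true_and]
        exact ⟨hv₀S, hx₀⟩
    rw [hC, Finset.sum_singleton] at hTsum
    exact hTsum
  funext x
  by_cases hx : x ∈ B
  · exact key x hx
  · exact h0 x hx
end

section
/- Let Γ = (V, F, π, B, ι) be a nonempty finite connected trivalent flag graph, and let x₀ ∈ B be a bounded flag such that the flag graph Γ' = (V, F, π, B \ {x₀, ι x₀}, ι restricted) obtained by deleting the bounded edge {x₀, ι x₀} (so that x₀ and ι x₀ become unbounded flags) is still connected (equivalently, the edge {x₀, ι x₀} lies on a cycle of Γ). Then the dimension of the space of compatible numberings of Γ with values in ℂ equals the dimension of the space of compatible numberings of Γ' with values in ℂ plus 1. (Note that the first Betti number of Γ' is one less than that of Γ.) -/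
open Finset

section Aux

variable {V F : Type}

lemma mem_compatibleNumberings {R : Type} [CommRing R] [Fintype F] [DecidableEq V]
    (π : F → V) (B : Finset F) (ι : F → F)
    {M : Type} [AddCommGroup M] [Module R M] (f : F → M) :
    f ∈ compatibleNumberings R π B ι M ↔
      (∀ x, x ∉ B → f x = 0) ∧
      (∀ v : V, ∑ x ∈ Finset.univ.filter (fun y => π y = v), f x = 0) ∧
      (∀ x ∈ B, f x + f (ι x) = 0) := Iff.rfl

lemma flowSum [Fintype F] [DecidableEq F] {y z : F} (hy : y ≠ z) (s : Finset F) :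
    ∑ x ∈ s, (if x = y then (1:ℂ) else if x = z then -1 else 0)
      = (if y ∈ s then 1 else 0) - (if z ∈ s then 1 else 0) := by
  have key : ∀ x, (if x = y then (1:ℂ) else if x = z then -1 else 0)
      = (if x = y then (1:ℂ) else 0) + (if x = z then (-1:ℂ) else 0) := by
    intro x
    by_cases hxy : x = y
    · subst hxy; simp [hy]
    · simp [hxy]
  rw [Finset.sum_congr rfl fun x _ => key x, Finset.sum_add_distrib,
    Finset.sum_ite_eq' s y (fun _ => (1:ℂ)), Finset.sum_ite_eq' s z (fun _ => (-1:ℂ))]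
  split_ifs <;> ring

lemma pair_add [DecidableEq F] {ι : F → F} {y x : F}
    (hyy : y ≠ ι y) (hxx : ι (ι x) = x) (hyyx : ι (ι y) = y) :
    (if x = y then (1:ℂ) else if x = ι y then -1 else 0)
      + (if ι x = y then (1:ℂ) else if ι x = ι y then -1 else 0) = 0 := by
  by_cases h1 : x = y
  · subst h1
    rw [if_pos rfl, if_neg (fun e => hyy e.symm), if_pos rfl]; ring
  · by_cases h2 : x = ι y
    · subst h2
      rw [if_neg h1, if_pos rfl, if_pos hyyx]; ring
    · have h3 : ι x ≠ y := fun e => h2 (by rw [← hxx, e])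
      have h4 : ι x ≠ ι y := fun e => h1 (by rw [← hxx, e, hyyx])
      rw [if_neg h1, if_neg h2, if_neg h3, if_neg h4]; ring

lemma adj_flag (π : F → V) (B' : Finset F) (ι : F → F)
    (hinv : ∀ x ∈ B', ι (ι x) = x) (hcl : ∀ x ∈ B', ι x ∈ B')
    {u v : V} (h : (flagGraph π B' ι).Adj u v) :
    ∃ y ∈ B', π y = u ∧ π (ι y) = v := by
  rw [flagGraph, SimpleGraph.fromRel_adj] at h
  obtain ⟨-, h | h⟩ := h
  · exact h
  · obtain ⟨x, hx, h1, h2⟩ := h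
    exact ⟨ι x, hcl x hx, h2, by rw [hinv x hx]; exact h1⟩

lemma exists_flow [Fintype F] [DecidableEq V] [DecidableEq F]
    (π : F → V) (B' : Finset F) (ι : F → F)
    (hcl : ∀ x ∈ B', ι x ∈ B') (hinv : ∀ x ∈ B', ι (ι x) = x)
    (hne : ∀ x ∈ B', ι x ≠ x)
    {u w : V} (p : (flagGraph π B' ι).Walk u w) :
    ∃ f : F → ℂ, (∀ x, x ∉ B' → f x = 0) ∧ (∀ x ∈ B', f x + f (ι x) = 0) ∧
      ∀ v, ∑ x ∈ Finset.univ.filter (fun y => π y = v), f x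
        = (if u = v then 1 else 0) - (if w = v then 1 else 0) := by
  induction p with
  | nil => exact ⟨0, fun _ _ => rfl, fun _ _ => by simp, fun v => by simp⟩
  | @cons u b w h p ih =>
    obtain ⟨f, hf1, hf2, hf3⟩ := ih
    obtain ⟨y, hyB, hy1, hy2⟩ := adj_flag π B' ι hinv hcl h
    have hyne : y ≠ ι y := (hne y hyB).symm
    have hιy : ι y ∈ B' := hcl y hyB
    refine ⟨fun x => f x + (if x = y then 1 else if x = ι y then -1 else 0),
      fun x hx => ?_, fun x hx => ?_, fun v => ?_⟩
    · have h1 : x ≠ y := fun e => hx (e ▸ hyB)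
      have h2 : x ≠ ι y := fun e => hx (e ▸ hιy)
      simp [hf1 x hx, h1, h2]
    · have h0 := hf2 x hx
      have h1 := pair_add (ι := ι) (y := y) (x := x) hyne (hinv x hx) (hinv y hyB)
      linear_combination h0 + h1
    · rw [Finset.sum_add_distrib, hf3 v, flowSum hyne]
      have e1 : (if y ∈ Finset.univ.filter (fun t => π t = v) then (1:ℂ) else 0)
          = (if u = v then 1 else 0) := by
        by_cases hc : u = v <;> simp [Finset.mem_filter, hy1, hc]
      have e2 : (if ι y ∈ Finset.univ.filter (fun t => π t = v) then (1:ℂ) else 0)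
          = (if b = v then 1 else 0) := by
        by_cases hc : b = v <;> simp [Finset.mem_filter, hy2, hc]
      rw [e1, e2]; ring

lemma exists_compatible_one
    [Fintype V] [Fintype F] [DecidableEq V] [DecidableEq F]
    (π : F → V) (B : Finset F) (ι : F → F)
    (hιB : ∀ x ∈ B, ι x ∈ B) (hιinv : ∀ x ∈ B, ι (ι x) = x) (hιne : ∀ x ∈ B, ι x ≠ x)
    (x₀ : F) (hx₀ : x₀ ∈ B)
    (hconn' : (flagGraph π (B \ {x₀, ι x₀}) ι).Connected) :
    ∃ f ∈ compatibleNumberings ℂ π B ι ℂ, f x₀ = 1 := by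
  classical
  set B' : Finset F := B \ {x₀, ι x₀} with hB'
  have hx₀B' : x₀ ∉ B' := by simp [hB']
  have hιx₀B' : ι x₀ ∉ B' := by simp [hB']
  have hsub : B' ⊆ B := Finset.sdiff_subset
  have hx₀ne : x₀ ≠ ι x₀ := (hιne x₀ hx₀).symm
  have hιx₀B : ι x₀ ∈ B := hιB x₀ hx₀
  -- the "unit flow" on the cut edge
  set g : F → ℂ := fun x => if x = x₀ then 1 else if x = ι x₀ then -1 else 0 with hg
  have hg_nonB : ∀ x, x ∉ B → g x = 0 := by
    intro x hx
    have h1 : x ≠ x₀ := fun e => hx (e ▸ hx₀)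
    have h2 : x ≠ ι x₀ := fun e => hx (e ▸ hιx₀B)
    simp [hg, h1, h2]
  have hg_pair : ∀ x ∈ B, g x + g (ι x) = 0 := fun x hx =>
    pair_add (ι := ι) (y := x₀) (x := x) hx₀ne (hιinv x hx) (hιinv x₀ hx₀)
  have hg_sum : ∀ v, ∑ x ∈ Finset.univ.filter (fun y => π y = v), g x
      = (if π x₀ = v then 1 else 0) - (if π (ι x₀) = v then 1 else 0) := by
    intro v
    rw [hg, flowSum hx₀ne]
    have e1 : (if x₀ ∈ Finset.univ.filter (fun t => π t = v) then (1:ℂ) else 0)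
        = (if π x₀ = v then 1 else 0) := by
      by_cases hc : π x₀ = v <;> simp [Finset.mem_filter, hc]
    have e2 : (if ι x₀ ∈ Finset.univ.filter (fun t => π t = v) then (1:ℂ) else 0)
        = (if π (ι x₀) = v then 1 else 0) := by
      by_cases hc : π (ι x₀) = v <;> simp [Finset.mem_filter, hc]
    rw [e1, e2]
  have hg_x₀ : g x₀ = 1 := by simp [hg]
  by_cases hloop : π x₀ = π (ι x₀)
  · -- loop case: g itself works
    refine ⟨g, ⟨hg_nonB, fun v => ?_, hg_pair⟩, hg_x₀⟩
    rw [hg_sum v, hloop]; ring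
  · -- properties of B' under ι
    have hcl' : ∀ x ∈ B', ι x ∈ B' := by
      intro x hx
      rw [hB', Finset.mem_sdiff] at hx ⊢
      obtain ⟨hxB, hxpair⟩ := hx
      refine ⟨hιB x hxB, ?_⟩
      simp only [Finset.mem_insert, Finset.mem_singleton] at hxpair ⊢
      push_neg at hxpair ⊢
      constructor
      · intro e; exact hxpair.2 (by rw [← hιinv x hxB, e])
      · intro e; exact hxpair.1 (by rw [← hιinv x hxB, e, hιinv x₀ hx₀])
    have hinv' : ∀ x ∈ B', ι (ι x) = x := fun x hx => hιinv x (hsub hx)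
    have hne' : ∀ x ∈ B', ι x ≠ x := fun x hx => hιne x (hsub hx)
    obtain ⟨p⟩ := hconn'.preconnected (π (ι x₀)) (π x₀)
    obtain ⟨f, hf1, hf2, hf3⟩ := exists_flow π B' ι hcl' hinv' hne' p
    refine ⟨f + g, ⟨fun x hx => ?_, fun v => ?_, fun x hx => ?_⟩, ?_⟩
    · have : x ∉ B' := fun hc => hx (hsub hc)
      simp [hf1 x this, hg_nonB x hx]
    · simp only [Pi.add_apply, Finset.sum_add_distrib, hf3 v, hg_sum v]
      ring
    · have hgp := hg_pair x hx
      have hfp : f x + f (ι x) = 0 := by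
        by_cases hxB' : x ∈ B'
        · exact hf2 x hxB'
        · have hxpair : x = x₀ ∨ x = ι x₀ := by
            rw [hB', Finset.mem_sdiff] at hxB'
            push_neg at hxB'
            simpa using hxB' hx
          have hx0 : f x = 0 := by
            rcases hxpair with e | e <;> rw [e] <;>
              [exact hf1 _ hx₀B'; exact hf1 _ hιx₀B']
          have hιx0 : f (ι x) = 0 := by
            rcases hxpair with e | e
            · rw [e]; exact hf1 _ hιx₀B'
            · rw [e, hιinv x₀ hx₀]; exact hf1 _ hx₀B'
          rw [hx0, hιx0, add_zero]
      simp only [Pi.add_apply]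
      linear_combination hfp + hgp
    · have : f x₀ = 0 := hf1 x₀ hx₀B'
      simp [this, hg_x₀]

end Aux

set_option synthInstance.maxHeartbeats 1000000 in
set_option maxHeartbeats 1000000 in
/-- Cutting a cycle edge: if `Γ` is a nonempty finite connected trivalent flag graph and
`x₀` is a bounded flag such that deleting the bounded edge `{x₀, ι x₀}` (turning its two
flags into unbounded ones) leaves the underlying graph connected, then the dimension of
the space of compatible numberings of `Γ` with values in `ℂ` equals that of the cut graph
`Γ'` plus `1`. -/
theorem dim_compatibleNumberings_cut_cycle_edge
    {V F : Type} [Fintype V] [Fintype F] [DecidableEq V] [DecidableEq F] [Nonempty V]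
    (π : F → V) (B : Finset F) (ι : F → F)
    (htri : ∀ v : V, (Finset.univ.filter (fun x => π x = v)).card = 3)
    (hιB : ∀ x ∈ B, ι x ∈ B)
    (hιinv : ∀ x ∈ B, ι (ι x) = x)
    (hιne : ∀ x ∈ B, ι x ≠ x)
    (hconn : (flagGraph π B ι).Connected)
    (x₀ : F) (hx₀ : x₀ ∈ B)
    (hconn' : (flagGraph π (B \ {x₀, ι x₀}) ι).Connected) :
    Module.finrank ℂ ↥(compatibleNumberings ℂ π B ι ℂ) =
      Module.finrank ℂ ↥(compatibleNumberings ℂ π (B \ {x₀, ι x₀}) ι ℂ) + 1 := by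
  classical
  set S := compatibleNumberings ℂ π B ι ℂ with hS
  set S' := compatibleNumberings ℂ π (B \ {x₀, ι x₀}) ι ℂ with hS'
  set B' : Finset F := B \ {x₀, ι x₀} with hB'
  have hx₀B' : x₀ ∉ B' := by simp [hB']
  have hιx₀B' : ι x₀ ∉ B' := by simp [hB']
  have hsub : B' ⊆ B := Finset.sdiff_subset
  obtain ⟨f₀, hf₀S, hf₀⟩ := exists_compatible_one π B ι hιB hιinv hιne x₀ hx₀ hconn'
  let L : ↥S →ₗ[ℂ] ℂ := (LinearMap.proj x₀).comp S.subtype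
  have hL : ∀ p : ↥S, L p = (p : F → ℂ) x₀ := fun p => rfl
  have hrange : LinearMap.range L = ⊤ := by
    rw [LinearMap.range_eq_top]
    intro c
    refine ⟨c • ⟨f₀, hf₀S⟩, ?_⟩
    rw [map_smul, hL]
    simp [hf₀]
  have hker : ∀ f : F → ℂ, f ∈ S' ↔ f ∈ S ∧ f x₀ = 0 := by
    intro f
    rw [hS, hS', mem_compatibleNumberings, mem_compatibleNumberings]
    constructor
    · rintro ⟨h1, h2, h3⟩
      have hx0 : f x₀ = 0 := h1 x₀ hx₀B'
      have hιx0 : f (ι x₀) = 0 := h1 (ι x₀) hιx₀B'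
      refine ⟨⟨fun x hx => h1 x (fun hc => hx (hsub hc)), h2, fun x hx => ?_⟩, hx0⟩
      by_cases hxB' : x ∈ B'
      · exact h3 x hxB'
      · have hxpair : x = x₀ ∨ x = ι x₀ := by
          rw [hB', Finset.mem_sdiff] at hxB'
          push_neg at hxB'
          simpa using hxB' hx
        rcases hxpair with e | e
        · rw [e, hx0, hιx0, add_zero]
        · rw [e, hιx0, hιinv x₀ hx₀, hx0, add_zero]
    · rintro ⟨⟨h1, h2, h3⟩, hx0⟩
      have hιx0 : f (ι x₀) = 0 := by
        have := h3 x₀ hx₀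
        rw [hx0, zero_add] at this
        exact this
      refine ⟨fun x hx => ?_, h2, fun x hx => h3 x (hsub hx)⟩
      by_cases hxB : x ∈ B
      · have hxpair : x = x₀ ∨ x = ι x₀ := by
          rw [hB', Finset.mem_sdiff] at hx
          push_neg at hx
          simpa using hx hxB
        rcases hxpair with e | e
        · rw [e]; exact hx0
        · rw [e]; exact hιx0
      · exact h1 x hxB
  let e : ↥S' ≃ₗ[ℂ] ↥(LinearMap.ker L) :=
    { toFun := fun g => ⟨⟨g.1, ((hker g.1).mp g.2).1⟩, by
        rw [LinearMap.mem_ker, hL]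
        exact ((hker g.1).mp g.2).2⟩
      map_add' := fun a b => rfl
      map_smul' := fun c a => rfl
      invFun := fun g => ⟨g.1.1, (hker g.1.1).mpr ⟨g.1.2, by
        have := g.2
        rw [LinearMap.mem_ker, hL] at this
        exact this⟩⟩
      left_inv := fun a => rfl
      right_inv := fun a => rfl }
  have hrn := LinearMap.finrank_range_add_finrank_ker L
  rw [hrange, finrank_top, Module.finrank_self] at hrn
  have hk : Module.finrank ℂ ↥S' = Module.finrank ℂ ↥(LinearMap.ker L) :=
    LinearEquiv.finrank_eq e
  omega
end

section
/- Let n ≥ 1, let Γ be a nonempty finite connected trivalent flag graph with first Betti number 1, and let d : B → ℝⁿ \ {0} be a direction assignment, i.e., d(ι x) = −d(x) for all x ∈ B. Let S be the ℂ-vector space of compatible numberings f of Γ with values in the dual space (ℂⁿ)* that in addition satisfy f(x)(d(x)) = 0 for every bounded flag x. Then dim_ℂ S = n − dim_ℝ span_ℝ{ d(x) : x a bounded flag whose edge is a cycle edge }, i.e., S is isomorphic to the annihilator of the real span of the directions of the cycle edges. -/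
open Finset

/-- The submodule of functions `f : F → (ℂⁿ)*` satisfying the extra linear condition
`f x (d x) = 0` for every bounded flag `x`, where `d x ∈ ℝⁿ ⊆ ℂⁿ`. -/
noncomputable def evalConditions {F : Type} (B : Finset F) (n : ℕ) (d : F → (Fin n → ℝ)) :
    Submodule ℂ (F → Module.Dual ℂ (Fin n → ℂ)) where
  carrier := {f | ∀ x ∈ B, f x (fun i => (d x i : ℂ)) = 0}
  add_mem' := by
    intro f g hf hg x hx
    simp [hf x hx, hg x hx]
  zero_mem' := by intro x hx; simp
  smul_mem' := by
    intro c f hf x hx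
    simp [Pi.smul_apply, hf x hx]

open Module

set_option linter.unusedSectionVars false
set_option maxHeartbeats 1000000

namespace FlagAux

variable {V F : Type} [Fintype V] [Fintype F] [DecidableEq V] [DecidableEq F]

def Rel (π : F → V) (ι : F → F) (B₀ : Finset F) (v w : V) : Prop :=
  ∃ x ∈ B₀, π x = v ∧ π (ι x) = w

def Reach (π : F → V) (ι : F → F) (B₀ : Finset F) : V → V → Prop :=
  Relation.ReflTransGen (Rel π ι B₀)

variable (π : F → V) (ι : F → F)

def IsWalk (B₀ : Finset F) : List F → V → V → Prop
  | [], a, b => a = b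
  | y :: L, a, b => y ∈ B₀ ∧ π y = a ∧ IsWalk B₀ L (π (ι y)) b

def vlist (L : List F) (a : V) : List V := a :: L.map (fun y => π (ι y))

lemma vlist_cons {y : F} {L : List F} {a : V} :
    vlist π ι (y :: L) a = a :: vlist π ι L (π (ι y)) := rfl

variable {π ι}

lemma walk_reach {B₀ : Finset F} : ∀ {L : List F} {a b : V},
    IsWalk π ι B₀ L a b → Reach π ι B₀ a b := by
  intro L
  induction L with
  | nil =>
    rintro a b h
    have h' : a = b := h
    subst h'
    exact Relation.ReflTransGen.refl
  | cons y L ih =>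
    rintro a b ⟨hy, hπ, hw⟩
    exact Relation.ReflTransGen.head ⟨y, hy, hπ, rfl⟩ (ih hw)

lemma walk_append {B₀ : Finset F} : ∀ {L L' : List F} {a b c : V},
    IsWalk π ι B₀ L a b → IsWalk π ι B₀ L' b c → IsWalk π ι B₀ (L ++ L') a c := by
  intro L
  induction L with
  | nil => rintro L' a b c rfl h; exact h
  | cons y L ih =>
    rintro L' a b c ⟨hy, hπ, hw⟩ h'
    exact ⟨hy, hπ, ih hw h'⟩

lemma reach_walk {B₀ : Finset F} {a b : V} (h : Reach π ι B₀ a b) :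
    ∃ L, IsWalk π ι B₀ L a b := by
  induction h with
  | refl => exact ⟨[], rfl⟩
  | tail h hr ih =>
    obtain ⟨L, hL⟩ := ih
    obtain ⟨x, hx, h1, h2⟩ := hr
    exact ⟨L ++ [x], walk_append hL ⟨hx, h1, h2⟩⟩

lemma walk_mono {B₀ B₁ : Finset F} : ∀ {L : List F} {a b : V},
    IsWalk π ι B₀ L a b → (∀ y ∈ L, y ∈ B₁) → IsWalk π ι B₁ L a b := by
  intro L
  induction L with
  | nil => rintro a b h _; exact h
  | cons y L ih =>
    rintro a b ⟨hy, hπ, hw⟩ hmem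
    exact ⟨hmem y (List.mem_cons_self), hπ, ih hw fun z hz => hmem z (List.mem_cons_of_mem _ hz)⟩

lemma walk_flags_mem {B₀ : Finset F} : ∀ {L : List F} {a b : V},
    IsWalk π ι B₀ L a b → ∀ y ∈ L, y ∈ B₀ := by
  intro L
  induction L with
  | nil => rintro a b h y hy; simp at hy
  | cons y L ih =>
    rintro a b ⟨hy, hπ, hw⟩ z hz
    rcases List.mem_cons.1 hz with rfl | hz
    · exact hy
    · exact ih hw z hz

lemma walk_suffix {B₀ : Finset F} : ∀ {L : List F} {a b c : V},
    IsWalk π ι B₀ L a b → c ∈ vlist π ι L a →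
    ∃ L', IsWalk π ι B₀ L' c b ∧ vlist π ι L' c <:+ vlist π ι L a := by
  intro L
  induction L with
  | nil =>
    rintro a b c h hc
    simp only [vlist, List.map_nil, List.mem_singleton] at hc
    subst hc
    exact ⟨[], h, List.suffix_refl _⟩
  | cons y L ih =>
    rintro a b c ⟨hy, hπ, hw⟩ hc
    rcases List.mem_cons.1 hc with rfl | hc
    · exact ⟨y :: L, ⟨hy, hπ, hw⟩, List.suffix_refl _⟩
    · obtain ⟨L', h1, h2⟩ := ih hw hc
      exact ⟨L', h1, h2.trans (List.suffix_cons _ _)⟩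

lemma exists_nodup_walk {B₀ : Finset F} : ∀ {L : List F} {a b : V},
    IsWalk π ι B₀ L a b →
    ∃ L', IsWalk π ι B₀ L' a b ∧ (vlist π ι L' a).Nodup := by
  intro L
  induction L with
  | nil =>
    rintro a b h
    exact ⟨[], h, by simp [vlist]⟩
  | cons y L ih =>
    rintro a b ⟨hy, hπ, hw⟩
    obtain ⟨L', h1, h2⟩ := ih hw
    by_cases ha : a ∈ vlist π ι L' (π (ι y))
    · obtain ⟨L'', h3, h4⟩ := walk_suffix h1 ha
      exact ⟨L'', h3, h4.sublist.nodup h2⟩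
    · refine ⟨y :: L', ⟨hy, hπ, h1⟩, ?_⟩
      rw [vlist_cons, List.nodup_cons]
      exact ⟨ha, h2⟩

lemma start_mem_vlist {B₀ : Finset F} : ∀ {L : List F} {a b : V},
    IsWalk π ι B₀ L a b → ∀ z ∈ L, π z ∈ vlist π ι L a := by
  intro L
  induction L with
  | nil => rintro a b h z hz; simp at hz
  | cons y L ih =>
    rintro a b ⟨hy, hπ, hw⟩ z hz
    rcases List.mem_cons.1 hz with rfl | hz
    · rw [hπ]; exact List.mem_cons_self
    · have := ih hw z hz
      simp only [vlist, List.map_cons] at this ⊢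
      rcases List.mem_cons.1 this with h | h
      · exact List.mem_cons_of_mem _ (h ▸ List.mem_cons_self)
      · exact List.mem_cons_of_mem _ (List.mem_cons_of_mem _ h)

lemma walk_nodup_flags {B₀ : Finset F} : ∀ {L : List F} {a b : V},
    IsWalk π ι B₀ L a b → (vlist π ι L a).Nodup → L.Nodup := by
  intro L
  induction L with
  | nil => intro a b _ _; exact List.nodup_nil
  | cons y L ih =>
    rintro a b ⟨hy, hπ, hw⟩ hnd
    rw [vlist_cons, List.nodup_cons] at hnd
    obtain ⟨ha, hnd'⟩ := hnd
    refine List.nodup_cons.2 ⟨fun hyL => ?_, ih hw hnd'⟩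
    have := start_mem_vlist hw y hyL
    rw [hπ] at this
    exact ha this

lemma walk_no_pair {B₀ : Finset F} (hinv : ∀ x ∈ B₀, ι (ι x) = x)
    (hne : ∀ x ∈ B₀, ι x ≠ x) : ∀ {L : List F} {a b : V},
    IsWalk π ι B₀ L a b → (vlist π ι L a).Nodup → ∀ z ∈ L, ι z ∉ L := by
  intro L
  induction L with
  | nil => intro a b _ _ z hz; simp at hz
  | cons y L ih =>
    rintro a b ⟨hy, hπ, hw⟩ hnd z hz hιz
    rw [vlist_cons, List.nodup_cons] at hnd
    obtain ⟨ha, hnd'⟩ := hnd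
    have key : ∀ w, w ∈ L → π (ι w) = a → False := by
      intro w hw' hwa
      refine ha ?_
      simp only [vlist]
      exact List.mem_cons_of_mem _ (hwa ▸ List.mem_map_of_mem hw')
    rcases List.mem_cons.1 hz with rfl | hz
    · rcases List.mem_cons.1 hιz with h | h
      · exact hne z hy h
      · refine key (ι z) h ?_
        rw [hinv z hy, hπ]
    · rcases List.mem_cons.1 hιz with h | h
      · have hzB : z ∈ B₀ := walk_flags_mem hw z hz
        refine key z hz ?_
        rw [← h] at hπ
        exact hπ
      · exact ih hw hnd' z hz h



variable {π : F → V} {ι : F → F}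

lemma rel_symm {B₀ : Finset F} (hcl : ∀ x ∈ B₀, ι x ∈ B₀)
    (hinv : ∀ x ∈ B₀, ι (ι x) = x) : Symmetric (Rel π ι B₀) := by
  rintro v w ⟨x, hx, rfl, rfl⟩
  exact ⟨ι x, hcl x hx, rfl, by rw [hinv x hx]⟩

lemma reach_symm {B₀ : Finset F} (hcl : ∀ x ∈ B₀, ι x ∈ B₀)
    (hinv : ∀ x ∈ B₀, ι (ι x) = x) {v w : V} (h : Reach π ι B₀ v w) :
    Reach π ι B₀ w v := by
  haveI : Std.Symm (Rel π ι B₀) := ⟨fun a b hab => rel_symm hcl hinv hab⟩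
  exact (Relation.ReflTransGen.symmetric (r := Rel π ι B₀)).symm _ _ h


lemma reach_mono {B₀ B₁ : Finset F} (hsub : B₀ ⊆ B₁) {v w : V} {π : F → V} {ι : F → F}
    (h : Reach π ι B₀ v w) : Reach π ι B₁ v w := by
  refine Relation.ReflTransGen.mono ?_ v w h
  rintro a b ⟨x, hx, h1, h2⟩
  exact ⟨x, hsub hx, h1, h2⟩

lemma reachable_iff_reach {π : F → V} {ι : F → F} {B₀ : Finset F}
    (hcl : ∀ x ∈ B₀, ι x ∈ B₀) (hinv : ∀ x ∈ B₀, ι (ι x) = x) {v w : V} :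
    (flagGraph π B₀ ι).Reachable v w ↔
      Reach π ι B₀ v w := by
  constructor
  · intro h
    obtain ⟨p⟩ := h
    induction p with
    | nil => exact Relation.ReflTransGen.refl
    | cons h p ih =>
      refine Relation.ReflTransGen.head ?_ ih
      rcases h with ⟨-, h | h⟩
      · exact h
      · exact rel_symm hcl hinv h
  · intro h
    induction h with
    | refl => exact SimpleGraph.Reachable.refl _
    | tail h hr ih =>
      rename_i b c
      refine ih.trans ?_
      by_cases hbc : b = c
      · rw [hbc]
      · exact SimpleGraph.Adj.reachable ⟨hbc, Or.inl hr⟩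

/-- closure of `B₀ \ {x, ι x}` under `ι`. -/
lemma sdiff_pair_cl {B₀ : Finset F} (hcl : ∀ z ∈ B₀, ι z ∈ B₀)
    (hinv : ∀ z ∈ B₀, ι (ι z) = z) {x : F} (hx : x ∈ B₀) :
    ∀ z ∈ B₀ \ ({x, ι x} : Finset F), ι z ∈ B₀ \ ({x, ι x} : Finset F) := by
  intro z hz
  simp only [mem_sdiff, mem_insert, mem_singleton, not_or] at hz ⊢
  obtain ⟨hzB, hz1, hz2⟩ := hz
  refine ⟨hcl z hzB, fun h => hz2 ?_, fun h => hz1 ?_⟩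
  · rw [← hinv z hzB, h]
  · rw [← hinv z hzB, h, hinv x hx]

lemma sdiff_pair_inv {B₀ : Finset F} (hinv : ∀ z ∈ B₀, ι (ι z) = z) {x : F} :
    ∀ z ∈ B₀ \ ({x, ι x} : Finset F), ι (ι z) = z := fun z hz =>
  hinv z (mem_sdiff.1 hz).1

/-- detour lemma: if the endpoints of `x` are still reachable after deleting `x`,
then deleting `x` preserves all reachability. -/
lemma reach_detour {B₀ : Finset F} (hcl : ∀ z ∈ B₀, ι z ∈ B₀)
    (hinv : ∀ z ∈ B₀, ι (ι z) = z) {x : F} (hx : x ∈ B₀)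
    (hdet : Reach π ι (B₀ \ {x, ι x}) (π x) (π (ι x))) {v w : V}
    (h : Reach π ι B₀ v w) : Reach π ι (B₀ \ {x, ι x}) v w := by
  induction h with
  | refl => exact Relation.ReflTransGen.refl
  | tail hr hstep ih =>
    rename_i b c
    refine ih.trans ?_
    obtain ⟨y, hy, h1, h2⟩ := hstep
    by_cases hyx : y = x
    · subst hyx; rw [← h1, ← h2]; exact hdet
    by_cases hyιx : y = ι x
    · subst hyιx
      rw [← h1, ← h2, hinv x hx]
      exact reach_symm (sdiff_pair_cl hcl hinv hx) (sdiff_pair_inv hinv) hdet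
    · exact Relation.ReflTransGen.single ⟨y, by simp [mem_sdiff, hy, hyx, hyιx], h1, h2⟩

section M

variable {M : Type} [AddCommGroup M]

/-- sum of an antisymmetric function over all flags is zero -/
lemma antisym_sum_zero [Fintype F] {B₀ : Finset F}
    (hcl : ∀ z ∈ B₀, ι z ∈ B₀) (hinv : ∀ z ∈ B₀, ι (ι z) = z)
    (hne : ∀ z ∈ B₀, ι z ≠ z) {f : F → M}
    (h0 : ∀ z, z ∉ B₀ → f z = 0) (hanti : ∀ z ∈ B₀, f z + f (ι z) = 0) :
    ∑ z, f z = 0 := by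
  have h1 : ∑ z, f z = ∑ z ∈ B₀, f z := by
    refine (Finset.sum_subset (Finset.subset_univ _) ?_).symm
    intro z _ hz
    exact h0 z hz
  rw [h1]
  exact Finset.sum_involution (fun a _ => ι a) (fun a ha => hanti a ha)
    (fun a ha _ => hne a ha) (fun a ha => hcl a ha) (fun a ha => hinv a ha)

/-- Step 1: a flow vanishes on any bridge. -/
lemma bridge_vanish [Fintype V] [Fintype F] {B₀ : Finset F}
    (hcl : ∀ z ∈ B₀, ι z ∈ B₀) (hinv : ∀ z ∈ B₀, ι (ι z) = z)
    (hne : ∀ z ∈ B₀, ι z ≠ z) {f : F → M}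
    (h0 : ∀ z, z ∉ B₀ → f z = 0)
    (hsum : ∀ v : V, ∑ z ∈ Finset.univ.filter (fun y => π y = v), f z = 0)
    (hanti : ∀ z ∈ B₀, f z + f (ι z) = 0)
    {x : F} (hx : x ∈ B₀)
    (hbr : ¬ Reach π ι (B₀ \ {x, ι x}) (π x) (π (ι x))) : f x = 0 := by
  classical
  set B' := B₀ \ ({x, ι x} : Finset F) with hB'
  set K : Finset V := Finset.univ.filter (fun v => Reach π ι B' (π x) v) with hK
  have hπxK : π x ∈ K := by
    simp only [hK, mem_filter, mem_univ, true_and]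
    exact Relation.ReflTransGen.refl
  have hπιxK : π (ι x) ∉ K := by
    simp only [hK, mem_filter, mem_univ, true_and]
    exact hbr
  have hKcl : ∀ z ∈ B', π z ∈ K → π (ι z) ∈ K := by
    intro z hz hπz
    simp only [hK, mem_filter, mem_univ, true_and] at hπz ⊢
    exact hπz.tail ⟨z, hz, rfl, rfl⟩
  -- sum over all flags with vertex in K
  have h2 : ∑ z ∈ Finset.univ.filter (fun z => π z ∈ K), f z = 0 := by
    rw [← Finset.sum_fiberwise_eq_sum_filter Finset.univ K π f]
    exact Finset.sum_eq_zero fun v _ => hsum v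
  set s : Finset F := Finset.univ.filter (fun z => z ∈ B₀ ∧ π z ∈ K) with hs
  have h3 : ∑ z ∈ s, f z = 0 := by
    rw [← h2]
    refine Finset.sum_subset ?_ ?_
    · intro z hz
      simp only [hs, mem_filter, mem_univ, true_and] at hz
      simp only [mem_filter, mem_univ, true_and]
      exact hz.2
    · intro z hz1 hz2
      simp only [hs, mem_filter, mem_univ, true_and] at hz1 hz2
      push_neg at hz2
      exact h0 z fun hzB => absurd hz1 (by simpa [hzB] using hz2 hzB)
  have hxs : x ∈ s := by simp [hs, hx, hπxK]
  have h4 : ∑ z ∈ s.erase x, f z + f x = ∑ z ∈ s, f z := Finset.sum_erase_add s f hxs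
  have h5 : ∑ z ∈ s.erase x, f z = 0 := by
    have hmem : ∀ a ∈ s.erase x, ι a ∈ s.erase x := by
      intro a ha
      obtain ⟨hax, has⟩ := Finset.mem_erase.1 ha
      simp only [hs, mem_filter, mem_univ, true_and] at has
      obtain ⟨haB, haK⟩ := has
      have haιx : a ≠ ι x := by
        rintro rfl
        exact hπιxK haK
      have haB' : a ∈ B' := by simp [hB', mem_sdiff, haB, hax, haιx]
      refine Finset.mem_erase.2 ⟨fun h => haιx ?_, ?_⟩
      · rw [← hinv a haB, h]
      · simp only [hs, mem_filter, mem_univ, true_and]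
        exact ⟨hcl a haB, hKcl a haB' haK⟩
    refine Finset.sum_involution (fun a ha => ι a) ?_ ?_ hmem ?_
    · intro a ha
      exact hanti a (by
        have := (Finset.mem_erase.1 ha).2
        simp only [hs, mem_filter, mem_univ, true_and] at this
        exact this.1)
    · intro a ha _
      refine hne a ?_
      have := (Finset.mem_erase.1 ha).2
      simp only [hs, mem_filter, mem_univ, true_and] at this
      exact this.1
    · intro a ha
      refine hinv a ?_
      have := (Finset.mem_erase.1 ha).2
      simp only [hs, mem_filter, mem_univ, true_and] at this
      exact this.1
  rw [h5, zero_add] at h4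
  rw [h4, h3]

end M



noncomputable def orient (ι : F → F) (B₀ : Finset F) : Finset F :=
  B₀.filter (fun z => (Fintype.equivFin F z : ℕ) < (Fintype.equivFin F (ι z) : ℕ))

variable {ι : F → F}

lemma orient_subset {B₀ : Finset F} : orient ι B₀ ⊆ B₀ := Finset.filter_subset _ _

lemma mem_orient_or {B₀ : Finset F} (hcl : ∀ z ∈ B₀, ι z ∈ B₀)
    (hinv : ∀ z ∈ B₀, ι (ι z) = z) (hne : ∀ z ∈ B₀, ι z ≠ z)
    {z : F} (hz : z ∈ B₀) : z ∈ orient ι B₀ ∨ ι z ∈ orient ι B₀ := by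
  have hne' : (Fintype.equivFin F z : ℕ) ≠ (Fintype.equivFin F (ι z) : ℕ) := by
    intro h
    exact hne z hz ((Fintype.equivFin F).injective (Fin.ext h.symm))
  rcases lt_or_gt_of_ne hne' with h | h
  · exact Or.inl (Finset.mem_filter.2 ⟨hz, h⟩)
  · refine Or.inr (Finset.mem_filter.2 ⟨hcl z hz, ?_⟩)
    rw [hinv z hz]
    exact h

lemma not_mem_orient_iota {B₀ : Finset F} (hinv : ∀ z ∈ B₀, ι (ι z) = z)
    {z : F} (hz : z ∈ B₀) (h : z ∈ orient ι B₀) : ι z ∉ orient ι B₀ := by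
  intro h'
  have h1 := (Finset.mem_filter.1 h).2
  have h2 := (Finset.mem_filter.1 h').2
  rw [hinv z hz] at h2
  omega

lemma orient_card {B₀ : Finset F} (hcl : ∀ z ∈ B₀, ι z ∈ B₀)
    (hinv : ∀ z ∈ B₀, ι (ι z) = z) (hne : ∀ z ∈ B₀, ι z ≠ z) :
    2 * (orient ι B₀).card = B₀.card := by
  classical
  have key : B₀.card = (orient ι B₀).card +
      (B₀.filter (fun z => ¬ (Fintype.equivFin F z : ℕ) < (Fintype.equivFin F (ι z) : ℕ))).card := by
    rw [orient]
    exact (Finset.card_filter_add_card_filter_not _).symm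
  have hbij : (B₀.filter (fun z => ¬ (Fintype.equivFin F z : ℕ) <
      (Fintype.equivFin F (ι z) : ℕ))).card = (orient ι B₀).card := by
    refine Finset.card_bij (fun z _ => ι z) ?_ ?_ ?_
    · intro a ha
      obtain ⟨haB, hlt⟩ := Finset.mem_filter.1 ha
      refine Finset.mem_filter.2 ⟨hcl a haB, ?_⟩
      rw [hinv a haB]
      rcases mem_orient_or hcl hinv hne haB with h | h
      · exact absurd (Finset.mem_filter.1 h).2 hlt
      · have := (Finset.mem_filter.1 h).2
        rw [hinv a haB] at this
        exact this
    · intro a ha b hb hab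
      have haB := (Finset.mem_filter.1 ha).1
      have hbB := (Finset.mem_filter.1 hb).1
      have hab' : ι a = ι b := hab
      rw [← hinv a haB, hab', hinv b hbB]
    · intro b hb
      have hbB' : b ∈ B₀ := orient_subset hb
      refine ⟨ι b, ?_, show ι (ι b) = b from hinv b hbB'⟩
      refine Finset.mem_filter.2 ⟨hcl b hbB', ?_⟩
      rw [hinv b hbB']
      have h1 := (Finset.mem_filter.1 hb).2
      omega
  omega

noncomputable def divMap (π : F → V) : (F → ℂ) →ₗ[ℂ] (V → ℂ) where
  toFun f := fun v => ∑ z ∈ Finset.univ.filter (fun y => π y = v), f z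
  map_add' f g := by
    funext v
    simp [Finset.sum_add_distrib]
  map_smul' c f := by
    funext v
    simp [Finset.mul_sum]

noncomputable def gradMap (π : F → V) (ι : F → F) (B₀ : Finset F) : (V → ℂ) →ₗ[ℂ] (F → ℂ) where
  toFun h := fun z => if z ∈ B₀ then h (π z) - h (π (ι z)) else 0
  map_add' h g := by
    funext z
    by_cases hz : z ∈ B₀ <;> simp [hz] <;> ring
  map_smul' c h := by
    funext z
    by_cases hz : z ∈ B₀ <;> simp [hz] <;> ring

lemma conn_card {π : F → V} {B₀ : Finset F} [Nonempty V]
    (hcl : ∀ z ∈ B₀, ι z ∈ B₀) (hinv : ∀ z ∈ B₀, ι (ι z) = z)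
    (hne : ∀ z ∈ B₀, ι z ≠ z)
    (hconn : ∀ v w : V, Reach π ι B₀ v w) :
    2 * (Fintype.card V - 1) ≤ B₀.card := by
  classical
  set O := orient ι B₀ with hO
  set D : (V → ℂ) →ₗ[ℂ] (↥O → ℂ) :=
    (LinearMap.funLeft ℂ ℂ (fun o : ↥O => (o : F))) ∘ₗ gradMap π ι B₀ with hD
  have hker : LinearMap.ker D ≤ Submodule.span ℂ {(fun _ => 1 : V → ℂ)} := by
    intro h hh
    have hh' : ∀ o : ↥O, gradMap π ι B₀ h (o : F) = 0 := by
      intro o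
      have h1 := congrFun (LinearMap.mem_ker.1 hh) o
      simpa [hD, LinearMap.funLeft] using h1
    have hgrad : ∀ z ∈ B₀, h (π z) = h (π (ι z)) := by
      intro z hz
      rcases mem_orient_or hcl hinv hne hz with hzO | hzO
      · have h1 := hh' ⟨z, hzO⟩
        simp only [gradMap, LinearMap.coe_mk, AddHom.coe_mk, if_pos hz] at h1
        exact sub_eq_zero.1 h1
      · have h1 := hh' ⟨ι z, hzO⟩
        simp only [gradMap, LinearMap.coe_mk, AddHom.coe_mk, if_pos (hcl z hz)] at h1
        rw [hinv z hz] at h1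
        exact (sub_eq_zero.1 h1).symm
    have hcst : ∀ v w : V, Reach π ι B₀ v w → h v = h w := by
      intro v w hr
      induction hr with
      | refl => rfl
      | tail hr hstep ih =>
        obtain ⟨z, hz, h1, h2⟩ := hstep
        rw [ih, ← h1, ← h2]
        exact hgrad z hz
    have v₀ : V := Classical.arbitrary V
    refine Submodule.mem_span_singleton.2 ⟨h v₀, ?_⟩
    funext v
    have := hcst v₀ v (hconn v₀ v)
    simp [← this]
  have hne1 : (fun _ => (1:ℂ) : V → ℂ) ≠ 0 := by
    intro h
    have := congrFun h (Classical.arbitrary V)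
    simp at this
  have h1 : finrank ℂ (LinearMap.ker D) ≤ 1 := by
    calc finrank ℂ (LinearMap.ker D)
        ≤ finrank ℂ (Submodule.span ℂ {(fun _ => 1 : V → ℂ)}) := Submodule.finrank_mono hker
      _ = 1 := finrank_span_singleton hne1
  have h2 : finrank ℂ (LinearMap.range D) ≤ O.card := by
    have h3 := Submodule.finrank_le (LinearMap.range D)
    rwa [Module.finrank_fintype_fun_eq_card, Fintype.card_coe] at h3
  have h3 := D.finrank_range_add_finrank_ker
  rw [Module.finrank_fintype_fun_eq_card] at h3
  have h4 : 2 * O.card = B₀.card := orient_card hcl hinv hne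
  have h5 : 0 < Fintype.card V := Fintype.card_pos
  omega

noncomputable def antisymSub (ι : F → F) (B₀ : Finset F) : Submodule ℂ (F → ℂ) where
  carrier := {f | (∀ z, z ∉ B₀ → f z = 0) ∧ ∀ z ∈ B₀, f z + f (ι z) = 0}
  add_mem' := by
    rintro f g ⟨hf1, hf2⟩ ⟨hg1, hg2⟩
    refine ⟨fun z hz => by simp [Pi.add_apply, hf1 z hz, hg1 z hz], fun z hz => ?_⟩
    have h : f z + g z + (f (ι z) + g (ι z)) = f z + f (ι z) + (g z + g (ι z)) := by abel
    simp only [Pi.add_apply]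
    rw [h, hf2 z hz, hg2 z hz, add_zero]
  zero_mem' := ⟨fun _ _ => rfl, fun _ _ => by simp⟩
  smul_mem' := by
    rintro c f ⟨hf1, hf2⟩
    refine ⟨fun z hz => by simp [Pi.smul_apply, hf1 z hz], fun z hz => ?_⟩
    simp only [Pi.smul_apply, ← smul_add, hf2 z hz, smul_zero]

noncomputable def extFun (ι : F → F) (B₀ : Finset F) (h : ↥(orient ι B₀) → ℂ) : F → ℂ :=
  fun z => if z ∈ B₀ then
    (if hzO : z ∈ orient ι B₀ then h ⟨z, hzO⟩ else 0) -
    (if hzO : ι z ∈ orient ι B₀ then h ⟨ι z, hzO⟩ else 0)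
  else 0

noncomputable def extMap (ι : F → F) (B₀ : Finset F) : (↥(orient ι B₀) → ℂ) →ₗ[ℂ] (F → ℂ) where
  toFun := extFun ι B₀
  map_add' h g := by
    funext z
    simp only [extFun, Pi.add_apply]
    split_ifs <;> ring
  map_smul' c h := by
    funext z
    simp only [extFun, Pi.smul_apply, smul_eq_mul, RingHom.id_apply]
    split_ifs <;> ring

lemma extMap_mem {B₀ : Finset F} (hcl : ∀ z ∈ B₀, ι z ∈ B₀)
    (hinv : ∀ z ∈ B₀, ι (ι z) = z) (h : ↥(orient ι B₀) → ℂ) :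
    extMap ι B₀ h ∈ antisymSub ι B₀ := by
  constructor
  · intro z hz
    simp only [extMap, extFun, LinearMap.coe_mk, AddHom.coe_mk, if_neg hz]
  · intro z hz
    simp only [extMap, extFun, LinearMap.coe_mk, AddHom.coe_mk, if_pos hz, if_pos (hcl z hz)]
    simp only [hinv z hz]
    ring

lemma extMap_inj {B₀ : Finset F} (hinv : ∀ z ∈ B₀, ι (ι z) = z) :
    Function.Injective (extMap ι B₀) := by
  rw [injective_iff_map_eq_zero]
  intro h hh
  funext o
  obtain ⟨z, hzO⟩ := o
  have hzB : z ∈ B₀ := orient_subset hzO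
  have h1 := congrFun hh z
  simp only [extMap, extFun, LinearMap.coe_mk, AddHom.coe_mk, if_pos hzB, dif_pos hzO,
    dif_neg (not_mem_orient_iota hinv hzB hzO), Pi.zero_apply, sub_zero] at h1
  exact h1

noncomputable def sumFunc : (V → ℂ) →ₗ[ℂ] ℂ where
  toFun h := ∑ v, h v
  map_add' h g := by simp [Finset.sum_add_distrib]
  map_smul' c h := by simp [Finset.mul_sum]

lemma finrank_ker_sumFunc [Nonempty V] :
    finrank ℂ (LinearMap.ker (sumFunc (V := V))) = Fintype.card V - 1 := by
  have hsurj : LinearMap.range (sumFunc (V := V)) = ⊤ := by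
    rw [LinearMap.range_eq_top]
    intro c
    refine ⟨fun _ => c / (Fintype.card V : ℂ), ?_⟩
    have hcard : (Fintype.card V : ℂ) ≠ 0 := by
      simp [Fintype.card_ne_zero]
    simp only [sumFunc, LinearMap.coe_mk, AddHom.coe_mk, Finset.sum_const, Finset.card_univ,
      nsmul_eq_mul]
    field_simp
  have h1 := (sumFunc (V := V)).finrank_range_add_finrank_ker
  rw [hsurj, Module.finrank_fintype_fun_eq_card] at h1
  rw [finrank_top, Module.finrank_self] at h1
  omega

lemma exists_nonzero_flow {π : F → V} {B₀ : Finset F} [Nonempty V]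
    (hcl : ∀ z ∈ B₀, ι z ∈ B₀) (hinv : ∀ z ∈ B₀, ι (ι z) = z)
    (hne : ∀ z ∈ B₀, ι z ≠ z)
    (hcard : 2 * Fintype.card V ≤ B₀.card)
    (h0' : ∀ z ∈ B₀, ι z ∈ B₀) :
    ∃ f : F → ℂ, (∀ z, z ∉ B₀ → f z = 0) ∧
      (∀ v : V, ∑ z ∈ Finset.univ.filter (fun y => π y = v), f z = 0) ∧
      (∀ z ∈ B₀, f z + f (ι z) = 0) ∧ f ≠ 0 := by
  classical
  set A := antisymSub ι B₀ with hA
  set E : (↥(orient ι B₀) → ℂ) →ₗ[ℂ] ↥A :=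
    LinearMap.codRestrict A (extMap ι B₀) (fun h => extMap_mem hcl hinv h) with hE
  have hEinj : Function.Injective E := by
    intro a b hab
    refine extMap_inj hinv ?_
    exact congrArg Subtype.val hab
  have hAfin : (orient ι B₀).card ≤ finrank ℂ ↥A := by
    have := LinearMap.finrank_le_finrank_of_injective hEinj
    rwa [Module.finrank_fintype_fun_eq_card, Fintype.card_coe] at this
  set Dr : ↥A →ₗ[ℂ] (V → ℂ) := (divMap π) ∘ₗ A.subtype with hDr
  have hrange : LinearMap.range Dr ≤ LinearMap.ker (sumFunc (V := V)) := by
    rintro - ⟨⟨f, hf1, hf2⟩, rfl⟩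
    simp only [LinearMap.mem_ker, hDr, LinearMap.comp_apply, Submodule.coe_subtype]
    simp only [sumFunc, divMap, LinearMap.coe_mk, AddHom.coe_mk]
    rw [Finset.sum_fiberwise_eq_sum_filter Finset.univ Finset.univ π f]
    rw [Finset.filter_true_of_mem (fun z _ => Finset.mem_univ (π z))]
    exact antisym_sum_zero hcl hinv hne hf1 hf2
  have h1 : finrank ℂ (LinearMap.range Dr) ≤ Fintype.card V - 1 := by
    calc finrank ℂ (LinearMap.range Dr) ≤ finrank ℂ (LinearMap.ker (sumFunc (V := V))) :=
          Submodule.finrank_mono hrange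
      _ = Fintype.card V - 1 := finrank_ker_sumFunc
  have h2 := Dr.finrank_range_add_finrank_ker
  have h3 := orient_card hcl hinv hne
  have h5 : 0 < Fintype.card V := Fintype.card_pos
  have hker : 0 < finrank ℂ (LinearMap.ker Dr) := by omega
  have hbot : LinearMap.ker Dr ≠ ⊥ := by
    intro h
    rw [h, finrank_bot] at hker
    omega
  obtain ⟨g, hgker, hgne⟩ := Submodule.ne_bot_iff _ |>.1 hbot
  obtain ⟨f, hf1, hf2⟩ := g
  refine ⟨f, hf1, ?_, hf2, ?_⟩
  · intro v
    have := congrFun (LinearMap.mem_ker.1 hgker) v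
    simpa [hDr, divMap] using this
  · intro hf0
    exact hgne (by
      apply Subtype.ext
      exact hf0)

noncomputable def basicFlow (ι : F → F) (y : F) : F → ℂ :=
  fun z => if z = y then 1 else if z = ι y then -1 else 0

noncomputable def walkFlow (ι : F → F) : List F → F → ℂ
  | [] => 0
  | y :: L => basicFlow ι y + walkFlow ι L

variable {π : F → V} {ι : F → F}

lemma basicFlow_div {y : F} (hyne : ι y ≠ y) (v : V) :
    ∑ z ∈ Finset.univ.filter (fun t => π t = v), basicFlow ι y z =
      (if π y = v then (1:ℂ) else 0) - (if π (ι y) = v then 1 else 0) := by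
  have hrw : basicFlow ι y =
      (fun z => if z = y then (1:ℂ) else 0) - (fun z => if z = ι y then 1 else 0) := by
    funext z
    simp only [basicFlow, Pi.sub_apply]
    by_cases h1 : z = y
    · subst h1
      simp [Ne.symm hyne]
    · by_cases h2 : z = ι y
      · subst h2
        simp [hyne]
      · simp [h1, h2]
  have e1 : (∑ z ∈ Finset.univ.filter (fun t => π t = v), if z = y then (1:ℂ) else 0)
      = if π y = v then 1 else 0 := by
    rw [Finset.sum_ite_eq' (Finset.univ.filter (fun t => π t = v)) y (fun _ => (1:ℂ))]
    simp only [Finset.mem_filter, Finset.mem_univ, true_and]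
  have e2 : (∑ z ∈ Finset.univ.filter (fun t => π t = v), if z = ι y then (1:ℂ) else 0)
      = if π (ι y) = v then 1 else 0 := by
    rw [Finset.sum_ite_eq' (Finset.univ.filter (fun t => π t = v)) (ι y) (fun _ => (1:ℂ))]
    simp only [Finset.mem_filter, Finset.mem_univ, true_and]
  rw [hrw]
  simp only [Pi.sub_apply]
  rw [Finset.sum_sub_distrib, e1, e2]

lemma basicFlow_antisym {B₀ : Finset F} (hcl : ∀ z ∈ B₀, ι z ∈ B₀)
    (hinv : ∀ z ∈ B₀, ι (ι z) = z) (hne : ∀ z ∈ B₀, ι z ≠ z)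
    {y : F} (hy : y ∈ B₀) {z : F} (hz : z ∈ B₀) :
    basicFlow ι y z + basicFlow ι y (ι z) = 0 := by
  simp only [basicFlow]
  by_cases h1 : z = y
  · subst h1
    rw [if_pos rfl, if_neg (fun h : ι z = z => hne z hz h), if_pos rfl]
    norm_num
  · by_cases h2 : z = ι y
    · subst h2
      rw [if_neg h1, if_pos rfl, if_pos (hinv y hy)]
      norm_num
    · have h3 : ι z ≠ y := fun h => h2 (by rw [← hinv z hz, h])
      have h4 : ι z ≠ ι y := fun h => h1 (by rw [← hinv z hz, h, hinv y hy])
      rw [if_neg h1, if_neg h2, if_neg h3, if_neg h4]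
      norm_num

lemma basicFlow_vanish {B₀ : Finset F} (hcl : ∀ z ∈ B₀, ι z ∈ B₀)
    {y : F} (hy : y ∈ B₀) {z : F} (hz : z ∉ B₀) : basicFlow ι y z = 0 := by
  simp only [basicFlow]
  rw [if_neg (fun h => hz (by rw [h]; exact hy)), if_neg (fun h => hz (by rw [h]; exact hcl y hy))]

lemma walkFlow_div {B₀ : Finset F} (hne : ∀ z ∈ B₀, ι z ≠ z) :
    ∀ {L : List F} {a b : V}, IsWalk π ι B₀ L a b → ∀ v : V,
    ∑ z ∈ Finset.univ.filter (fun t => π t = v), walkFlow ι L z =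
      (if a = v then (1:ℂ) else 0) - (if b = v then 1 else 0) := by
  intro L
  induction L with
  | nil =>
    rintro a b h v
    have h' : a = b := h
    subst h'
    simp [walkFlow]
  | cons y L ih =>
    rintro a b ⟨hy, hπ, hw⟩ v
    simp only [walkFlow, Pi.add_apply, Finset.sum_add_distrib]
    rw [basicFlow_div (hne y hy) v, ih hw v, hπ]
    ring

lemma walkFlow_eq_zero {B₀ : Finset F} (hinv : ∀ z ∈ B₀, ι (ι z) = z) :
    ∀ {L : List F} {a b : V}, IsWalk π ι B₀ L a b → ∀ z : F, z ∉ L → ι z ∉ L →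
    walkFlow ι L z = 0 := by
  intro L
  induction L with
  | nil => intro a b _ z _ _; rfl
  | cons y L ih =>
    rintro a b ⟨hy, hπ, hw⟩ z hz hιz
    simp only [walkFlow, Pi.add_apply]
    rw [ih hw z (fun h => hz (List.mem_cons_of_mem _ h))
      (fun h => hιz (List.mem_cons_of_mem _ h)), add_zero]
    simp only [basicFlow]
    have h1 : z ≠ y := fun h => hz (h ▸ List.mem_cons_self)
    have h2 : z ≠ ι y := by
      intro h
      refine hιz ?_
      rw [h, hinv y hy]
      exact List.mem_cons_self
    rw [if_neg h1, if_neg h2]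

lemma walkFlow_eq_neg_one {B₀ : Finset F} (hcl : ∀ z ∈ B₀, ι z ∈ B₀)
    (hinv : ∀ z ∈ B₀, ι (ι z) = z) (hne : ∀ z ∈ B₀, ι z ≠ z) :
    ∀ {L : List F} {a b : V}, IsWalk π ι B₀ L a b → L.Nodup →
    (∀ y ∈ L, ι y ∉ L) → ∀ z ∈ L, walkFlow ι L z = 1 := by
  intro L
  induction L with
  | nil => intro a b _ _ _ z hz; simp at hz
  | cons y L ih =>
    rintro a b ⟨hy, hπ, hw⟩ hnd hpair z hz
    obtain ⟨hynL, hnd'⟩ := List.nodup_cons.1 hnd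
    simp only [walkFlow, Pi.add_apply]
    rcases List.mem_cons.1 hz with rfl | hz
    · rw [walkFlow_eq_zero hinv hw z hynL ?_]
      · simp [basicFlow]
      · intro h
        exact hpair z (List.mem_cons_self) (List.mem_cons_of_mem _ h)
    · have h1 : z ≠ y := fun h => hynL (h ▸ hz)
      have h2 : z ≠ ι y := by
        intro h
        exact hpair y (List.mem_cons_self) (by rw [← h]; exact List.mem_cons_of_mem _ hz)
      rw [ih hw hnd' (fun t ht h => hpair t (List.mem_cons_of_mem _ ht)
        (List.mem_cons_of_mem _ h)) z hz]
      simp [basicFlow, h1, h2]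

lemma walkFlow_antisym {B : Finset F} (hcl : ∀ z ∈ B, ι z ∈ B)
    (hinv : ∀ z ∈ B, ι (ι z) = z) (hne : ∀ z ∈ B, ι z ≠ z)
    {B₀ : Finset F} (hB₀ : B₀ ⊆ B) :
    ∀ {L : List F} {a b : V}, IsWalk π ι B₀ L a b → ∀ z ∈ B,
    walkFlow ι L z + walkFlow ι L (ι z) = 0 := by
  intro L
  induction L with
  | nil => intro a b _ z _; simp [walkFlow]
  | cons y L ih =>
    rintro a b ⟨hy, hπ, hw⟩ z hz
    simp only [walkFlow, Pi.add_apply]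
    have h1 := basicFlow_antisym hcl hinv hne (hB₀ hy) hz
    have h2 := ih hw z hz
    linear_combination h1 + h2

lemma walkFlow_vanish {B₀ : Finset F} (hcl : ∀ z ∈ B₀, ι z ∈ B₀) :
    ∀ {L : List F} {a b : V}, IsWalk π ι B₀ L a b → ∀ z, z ∉ B₀ →
    walkFlow ι L z = 0 := by
  intro L
  induction L with
  | nil => intro a b _ z _; rfl
  | cons y L ih =>
    rintro a b ⟨hy, hπ, hw⟩ z hz
    simp only [walkFlow, Pi.add_apply]
    rw [basicFlow_vanish hcl hy hz, ih hw z hz, add_zero]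


lemma cycle_edges {B : Finset F} (hclB : ∀ z ∈ B, ι z ∈ B)
    (hinvB : ∀ z ∈ B, ι (ι z) = z) (hneB : ∀ z ∈ B, ι z ≠ z)
    {B₀ : Finset F} (hB₀ : B₀ ⊆ B) :
    ∀ {L : List F} {a b : V}, IsWalk π ι B₀ L a b → L.Nodup →
    (∀ y ∈ L, ι y ∉ L) →
    Reach π ι (B.filter (fun z => z ∉ L ∧ ι z ∉ L)) b a →
    ∀ y ∈ L, Reach π ι (B \ {y, ι y}) (π y) (π (ι y)) := by
  intro L
  induction L with
  | nil => intro a b _ _ _ _ y hy; simp at hy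
  | cons y L ih =>
    rintro a b ⟨hy, hπ, hw⟩ hnd hpair hret z hz
    obtain ⟨hynL, hnd'⟩ := List.nodup_cons.1 hnd
    have hyB : y ∈ B := hB₀ hy
    rcases List.mem_cons.1 hz with rfl | hz
    · -- the edge z = y itself
      have hflags : ∀ t ∈ L, t ∈ B \ ({z, ι z} : Finset F) := by
        intro t ht
        have htB : t ∈ B := hB₀ (walk_flags_mem hw t ht)
        simp only [Finset.mem_sdiff, Finset.mem_insert, Finset.mem_singleton, not_or]
        refine ⟨htB, fun h => hynL (h ▸ ht), fun h => ?_⟩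
        exact hpair z (List.mem_cons_self) (by rw [← h]; exact List.mem_cons_of_mem _ ht)
      have r1 : Reach π ι (B \ {z, ι z}) (π (ι z)) b := walk_reach (walk_mono hw hflags)
      have hsub : B.filter (fun t => t ∉ z :: L ∧ ι t ∉ z :: L) ⊆ B \ ({z, ι z} : Finset F) := by
        intro t ht
        obtain ⟨htB, ht1, ht2⟩ := Finset.mem_filter.1 ht
        simp only [Finset.mem_sdiff, Finset.mem_insert, Finset.mem_singleton, not_or]
        refine ⟨htB, fun h => ht1 (by rw [h]; exact List.mem_cons_self), fun h => ?_⟩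
        refine ht2 ?_
        rw [h, hinvB z (hB₀ hy)]
        exact List.mem_cons_self
      have r2 : Reach π ι (B \ {z, ι z}) b a := reach_mono hsub hret
      have r3 : Reach π ι (B \ {z, ι z}) (π (ι z)) (π z) := by
        rw [hπ]
        exact r1.trans r2
      exact reach_symm (sdiff_pair_cl hclB hinvB hyB) (sdiff_pair_inv hinvB) r3
    · refine ih hw hnd' (fun t ht h => hpair t (List.mem_cons_of_mem _ ht)
        (List.mem_cons_of_mem _ h)) ?_ z hz
      have hymem : y ∈ B.filter (fun t => t ∉ L ∧ ι t ∉ L) := by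
        refine Finset.mem_filter.2 ⟨hyB, hynL, fun h => ?_⟩
        exact hpair y (List.mem_cons_self) (List.mem_cons_of_mem _ h)
      have hmono : B.filter (fun t => t ∉ y :: L ∧ ι t ∉ y :: L) ⊆
          B.filter (fun t => t ∉ L ∧ ι t ∉ L) := by
        intro t ht
        obtain ⟨htB, ht1, ht2⟩ := Finset.mem_filter.1 ht
        exact Finset.mem_filter.2 ⟨htB, fun h => ht1 (List.mem_cons_of_mem _ h),
          fun h => ht2 (List.mem_cons_of_mem _ h)⟩
      refine (reach_mono hmono hret).tail ⟨y, hymem, hπ, rfl⟩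

end FlagAux

lemma complexify_span_finrank {n : ℕ} (S : Set (Fin n → ℝ)) :
    Module.finrank ℂ (Submodule.span ℂ
      ((fun u : Fin n → ℝ => (fun i => (u i : ℂ))) '' S)) =
      Module.finrank ℝ (Submodule.span ℝ S) := by
  classical
  set toC : (Fin n → ℝ) → (Fin n → ℂ) := fun u => (fun i => (u i : ℂ)) with htoC
  obtain ⟨s, hsS, hsspan, hsind⟩ := exists_linearIndependent ℝ S
  have hfin : s.Finite := hsind.setFinite
  haveI : Fintype ↥s := hfin.fintype
  -- real side
  have hreal : Module.finrank ℝ (Submodule.span ℝ S) = s.toFinset.card := by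
    rw [← hsspan, finrank_span_set_eq_card hsind]
  -- complex family
  set g : ↥s → (Fin n → ℂ) := fun x => toC (x : Fin n → ℝ) with hg
  have hrange : Set.range g = toC '' s := by
    rw [hg]
    ext u
    simp [Set.mem_image]
  have hgind : LinearIndependent ℂ g := by
    rw [Fintype.linearIndependent_iff]
    intro c hc i
    have hpt : ∀ j : Fin n, ∑ x : ↥s, c x * (((x : Fin n → ℝ) j : ℝ) : ℂ) = 0 := by
      intro j
      have h1 := congrFun hc j
      simpa [hg, htoC, Finset.sum_apply] using h1
    have hre : ∀ j : Fin n, ∑ x : ↥s, (c x).re * ((x : Fin n → ℝ) j) = 0 := by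
      intro j
      have h2 := congrArg Complex.re (hpt j)
      simpa [Complex.re_sum, Complex.mul_re] using h2
    have him : ∀ j : Fin n, ∑ x : ↥s, (c x).im * ((x : Fin n → ℝ) j) = 0 := by
      intro j
      have h2 := congrArg Complex.im (hpt j)
      simpa [Complex.im_sum, Complex.mul_im] using h2
    have hre0 := Fintype.linearIndependent_iff.1 hsind (fun x => (c x).re) (by
      funext j
      rw [Finset.sum_apply]
      simpa using hre j) i
    have him0 := Fintype.linearIndependent_iff.1 hsind (fun x => (c x).im) (by
      funext j
      rw [Finset.sum_apply]
      simpa using him j) i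
    exact Complex.ext hre0 him0
  -- toC maps real span into complex span
  have hkey : ∀ v, v ∈ Submodule.span ℝ s → toC v ∈ Submodule.span ℂ (toC '' s) := by
    intro v hv
    induction hv using Submodule.span_induction with
    | mem u hu => exact Submodule.subset_span ⟨u, hu, rfl⟩
    | zero =>
      have : toC 0 = 0 := by funext i; simp [htoC]
      rw [this]; exact Submodule.zero_mem _
    | add a b _ _ ha hb =>
      have : toC (a + b) = toC a + toC b := by funext i; simp [htoC]
      rw [this]; exact Submodule.add_mem _ ha hb
    | smul r a _ ha =>
      have : toC (r • a) = (r : ℂ) • toC a := by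
        funext i; simp [htoC]
      rw [this]; exact Submodule.smul_mem _ _ ha
  have hspan : Submodule.span ℂ (toC '' S) = Submodule.span ℂ (toC '' s) := by
    refine le_antisymm ?_ (Submodule.span_mono (Set.image_mono hsS))
    rw [Submodule.span_le]
    rintro - ⟨v, hvS, rfl⟩
    have hv : v ∈ Submodule.span ℝ s := by
      rw [hsspan]
      exact Submodule.subset_span hvS
    exact hkey v hv
  rw [hspan, ← hrange, finrank_span_eq_card hgind, hreal, Set.toFinset_card]

/-- For a genus one (first Betti number one) nonempty finite connected trivalent flag graph
with a direction assignment `d : B → ℝⁿ \ {0}` (with `d (ι x) = - d x`), the space of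
compatible numberings with values in `(ℂⁿ)*` annihilating the directions is isomorphic to
the annihilator of the real span of the directions of the cycle edges: its dimension is
`n` minus the dimension of that span. -/
theorem dim_dual_obstruction_genus_one
    {V F : Type} [Fintype V] [Fintype F] [DecidableEq V] [DecidableEq F] [Nonempty V]
    (n : ℕ) (hn : 1 ≤ n)
    (π : F → V) (B : Finset F) (ι : F → F)
    (htri : ∀ v : V, (Finset.univ.filter (fun x => π x = v)).card = 3)
    (hιB : ∀ x ∈ B, ι x ∈ B)
    (hιinv : ∀ x ∈ B, ι (ι x) = x)
    (hιne : ∀ x ∈ B, ι x ≠ x)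
    (hconn : (flagGraph π B ι).Connected)
    (hbetti : B.card + 2 = 2 * Fintype.card V + 2 * 1)
    (d : F → (Fin n → ℝ))
    (hd0 : ∀ x ∈ B, d x ≠ 0)
    (hdneg : ∀ x ∈ B, d (ι x) = - d x) :
    Module.finrank ℂ
        ↥(compatibleNumberings ℂ π B ι (Module.Dual ℂ (Fin n → ℂ)) ⊓ evalConditions B n d) =
      n - Module.finrank ℝ
        ↥(Submodule.span ℝ {v : Fin n → ℝ | ∃ x ∈ B,
            (flagGraph π (B \ {x, ι x}) ι).Reachable (π x) (π (ι x)) ∧ d x = v}) := by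
    classical
  set M := Module.Dual ℂ (Fin n → ℂ) with hM
  set toC : (Fin n → ℝ) → (Fin n → ℂ) := fun u => (fun i => (u i : ℂ)) with htoC
  -- connectivity in terms of Reach
  have hconnR : ∀ v w : V, FlagAux.Reach π ι B v w := fun v w =>
    (FlagAux.reachable_iff_reach hιB hιinv).1 (hconn.preconnected v w)
  have hcardV : 1 ≤ Fintype.card V := Fintype.card_pos
  have hcardB : B.card = 2 * Fintype.card V := by omega
  -- a nonzero scalar flow exists
  obtain ⟨f₀, hf01, hf02, hf03, hf0ne⟩ :=
    FlagAux.exists_nonzero_flow (π := π) hιB hιinv hιne (by omega) hιB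
  obtain ⟨x₀, hx₀ne⟩ : ∃ z, f₀ z ≠ 0 := Function.ne_iff.1 hf0ne
  have hx₀B : x₀ ∈ B := by
    by_contra h
    exact hx₀ne (hf01 x₀ h)
  have hx₀C : FlagAux.Reach π ι (B \ {x₀, ι x₀}) (π x₀) (π (ι x₀)) := by
    by_contra hbr
    exact hx₀ne (FlagAux.bridge_vanish hιB hιinv hιne hf01 hf02 hf03 hx₀B hbr)
  set B' := B \ ({x₀, ι x₀} : Finset F) with hB'
  have hB'cl : ∀ z ∈ B', ι z ∈ B' := FlagAux.sdiff_pair_cl hιB hιinv hx₀B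
  have hB'inv : ∀ z ∈ B', ι (ι z) = z := FlagAux.sdiff_pair_inv hιinv
  have hB'sub : B' ⊆ B := Finset.sdiff_subset
  have hB'ne : ∀ z ∈ B', ι z ≠ z := fun z hz => hιne z (hB'sub hz)
  have hx₀ιne : ι x₀ ≠ x₀ := hιne x₀ hx₀B
  -- a nodup walk realizing the cycle
  obtain ⟨L0, hL0⟩ := FlagAux.reach_walk hx₀C
  obtain ⟨L, hLwalk, hLvnd⟩ := FlagAux.exists_nodup_walk hL0
  have hLnd : L.Nodup := FlagAux.walk_nodup_flags hLwalk hLvnd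
  have hLpair : ∀ z ∈ L, ι z ∉ L := FlagAux.walk_no_pair hB'inv hB'ne hLwalk hLvnd
  have hLB' : ∀ y ∈ L, y ∈ B' := FlagAux.walk_flags_mem hLwalk
  have hLB : ∀ y ∈ L, y ∈ B := fun y hy => hB'sub (hLB' y hy)
  have hx₀nL : x₀ ∉ L := fun h => by
    have := hLB' x₀ h
    simp [hB'] at this
  have hιx₀nL : ι x₀ ∉ L := fun h => by
    have := hLB' (ι x₀) h
    simp [hB'] at this
  have hιιx₀nL : ι (ι x₀) ∉ L := by
    rw [hιinv x₀ hx₀B]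
    exact hx₀nL
  -- the cycle flow ε
  set ε : F → ℂ := FlagAux.basicFlow ι x₀ - FlagAux.walkFlow ι L with hε
  have hεx₀ : ε x₀ = 1 := by
    simp only [hε, Pi.sub_apply]
    rw [FlagAux.walkFlow_eq_zero hB'inv hLwalk x₀ hx₀nL hιx₀nL]
    simp [FlagAux.basicFlow]
  have hειx₀ : ε (ι x₀) = -1 := by
    simp only [hε, Pi.sub_apply]
    rw [FlagAux.walkFlow_eq_zero hB'inv hLwalk (ι x₀) hιx₀nL hιιx₀nL]
    simp [FlagAux.basicFlow, hx₀ιne]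
  have hεL : ∀ y ∈ L, ε y = -1 := by
    intro y hy
    have h1 : y ≠ x₀ := fun h => hx₀nL (h ▸ hy)
    have h2 : y ≠ ι x₀ := fun h => hιx₀nL (h ▸ hy)
    simp only [hε, Pi.sub_apply]
    rw [FlagAux.walkFlow_eq_neg_one hB'cl hB'inv hB'ne hLwalk hLnd hLpair y hy]
    simp [FlagAux.basicFlow, h1, h2]
  have hε0 : ∀ z, z ∉ B → ε z = 0 := by
    intro z hz
    simp only [hε, Pi.sub_apply]
    rw [FlagAux.basicFlow_vanish hιB hx₀B hz,
      FlagAux.walkFlow_vanish hB'cl hLwalk z (fun h => hz (hB'sub h))]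
    ring
  have hεanti : ∀ z ∈ B, ε z + ε (ι z) = 0 := by
    intro z hz
    simp only [hε, Pi.sub_apply]
    have h1 := FlagAux.basicFlow_antisym hιB hιinv hιne hx₀B hz
    have h2 := FlagAux.walkFlow_antisym hιB hιinv hιne hB'sub hLwalk z hz
    linear_combination h1 - h2
  have hεdiv : ∀ v : V, ∑ z ∈ Finset.univ.filter (fun y => π y = v), ε z = 0 := by
    intro v
    simp only [hε, Pi.sub_apply]
    rw [Finset.sum_sub_distrib, FlagAux.basicFlow_div hx₀ιne v,
      FlagAux.walkFlow_div hB'ne hLwalk v]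
    ring
  -- cycle edges reach lemma applied to the walk
  have hcyc : ∀ y ∈ L, FlagAux.Reach π ι (B \ {y, ι y}) (π y) (π (ι y)) := by
    refine FlagAux.cycle_edges hιB hιinv hιne hB'sub hLwalk hLnd hLpair ?_
    refine Relation.ReflTransGen.single ⟨ι x₀, Finset.mem_filter.2 ⟨hιB x₀ hx₀B, hιx₀nL,
      hιιx₀nL⟩, rfl, by rw [hιinv x₀ hx₀B]⟩
  -- support of ε consists of cycle edges
  have hεsupp : ∀ z, ε z ≠ 0 →
      z ∈ B ∧ FlagAux.Reach π ι (B \ {z, ι z}) (π z) (π (ι z)) := by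
    intro z hz
    have hzB : z ∈ B := by
      by_contra h
      exact hz (hε0 z h)
    refine ⟨hzB, ?_⟩
    by_cases h1 : z = x₀
    · subst h1
      exact hx₀C
    by_cases h2 : z = ι x₀
    · subst h2
      have hpairs : ({ι x₀, ι (ι x₀)} : Finset F) = {x₀, ι x₀} := by
        rw [hιinv x₀ hx₀B, Finset.pair_comm]
      rw [hpairs, hιinv x₀ hx₀B]
      exact FlagAux.reach_symm hB'cl hB'inv hx₀C
    by_cases h3 : z ∈ L
    · exact hcyc z h3
    by_cases h4 : ι z ∈ L
    · have hc := hcyc (ι z) h4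
      have hpairs : ({ι z, ι (ι z)} : Finset F) = {z, ι z} := by
        rw [hιinv z hzB, Finset.pair_comm]
      rw [hpairs, hιinv z hzB] at hc
      exact FlagAux.reach_symm (FlagAux.sdiff_pair_cl hιB hιinv hzB)
        (FlagAux.sdiff_pair_inv hιinv) hc
    · exfalso
      apply hz
      simp only [hε, Pi.sub_apply]
      rw [FlagAux.walkFlow_eq_zero hB'inv hLwalk z h3 h4]
      simp [FlagAux.basicFlow, h1, h2]
  -- connectivity of B'
  have hconnB' : ∀ v w, FlagAux.Reach π ι B' v w := fun v w =>
    FlagAux.reach_detour hιB hιinv hx₀B hx₀C (hconnR v w)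
  have hpairB : ({x₀, ι x₀} : Finset F) ⊆ B := by
    intro t ht
    rcases Finset.mem_insert.1 ht with rfl | ht
    · exact hx₀B
    · rw [Finset.mem_singleton.1 ht]
      exact hιB x₀ hx₀B
  have hcardB' : B'.card = B.card - 2 := by
    rw [hB', Finset.card_sdiff_of_subset hpairB, Finset.card_pair (Ne.symm hx₀ιne)]
  -- every edge of B' is a bridge of B'
  have hbridge : ∀ y ∈ B', ¬ FlagAux.Reach π ι (B' \ {y, ι y}) (π y) (π (ι y)) := by
    intro y hy hre
    have hconn2 : ∀ v w, FlagAux.Reach π ι (B' \ {y, ι y}) v w := fun v w =>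
      FlagAux.reach_detour hB'cl hB'inv hy hre (hconnB' v w)
    have hcount := FlagAux.conn_card (π := π) (FlagAux.sdiff_pair_cl hB'cl hB'inv hy)
      (FlagAux.sdiff_pair_inv hB'inv)
      (fun z hz => hB'ne z (Finset.mem_sdiff.1 hz).1) hconn2
    have hpair2 : ({y, ι y} : Finset F) ⊆ B' := by
      intro t ht
      rcases Finset.mem_insert.1 ht with rfl | ht
      · exact hy
      · rw [Finset.mem_singleton.1 ht]
        exact hB'cl y hy
    have hc2 : (B' \ {y, ι y}).card = B'.card - 2 := by
      rw [Finset.card_sdiff_of_subset hpair2, Finset.card_pair (Ne.symm (hB'ne y hy))]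
    have hge : ({y, ι y} : Finset F).card ≤ B'.card := Finset.card_le_card hpair2
    rw [Finset.card_pair (Ne.symm (hB'ne y hy))] at hge
    omega
  -- representation: every compatible numbering is a multiple of ε
  have hrep : ∀ f ∈ compatibleNumberings ℂ π B ι M, ∀ z, f z = ε z • f x₀ := by
    intro f hf
    obtain ⟨hf1, hf2, hf3⟩ := hf
    set g : F → M := fun z => f z - ε z • f x₀ with hg
    have hg1 : ∀ z, z ∉ B → g z = 0 := by
      intro z hz
      simp [hg, hf1 z hz, hε0 z hz]
    have hg2 : ∀ v : V, ∑ z ∈ Finset.univ.filter (fun y => π y = v), g z = 0 := by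
      intro v
      simp only [hg]
      rw [Finset.sum_sub_distrib, hf2 v, ← Finset.sum_smul, hεdiv v, zero_smul, sub_zero]
    have hg3 : ∀ z ∈ B, g z + g (ι z) = 0 := by
      intro z hz
      have he : g z + g (ι z) = (f z + f (ι z)) - (ε z + ε (ι z)) • f x₀ := by
        simp only [hg, add_smul]
        abel
      rw [he, hf3 z hz, hεanti z hz, zero_smul, sub_zero]
    have hgx₀ : g x₀ = 0 := by simp [hg, hεx₀]
    have hgιx₀ : g (ι x₀) = 0 := by
      have h := hg3 x₀ hx₀B
      rwa [hgx₀, zero_add] at h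
    have hg1' : ∀ z, z ∉ B' → g z = 0 := by
      intro z hz
      by_cases hzB : z ∈ B
      · have : z = x₀ ∨ z = ι x₀ := by
          by_contra hcon
          push_neg at hcon
          exact hz (by simp [hB', Finset.mem_sdiff, hzB, hcon.1, hcon.2])
        rcases this with rfl | rfl
        · exact hgx₀
        · exact hgιx₀
      · exact hg1 z hzB
    have hgB' : ∀ y ∈ B', g y = 0 := fun y hy =>
      FlagAux.bridge_vanish hB'cl hB'inv hB'ne hg1' hg2
        (fun z hz => hg3 z (hB'sub hz)) hy (hbridge y hy)
    intro z
    have hgz : g z = 0 := by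
      by_cases h : z ∈ B'
      · exact hgB' z h
      · exact hg1' z h
    have := sub_eq_zero.1 hgz
    exact this
  -- Cset ⊆ supp ε
  have hCsupp : ∀ x, x ∈ B →
      FlagAux.Reach π ι (B \ {x, ι x}) (π x) (π (ι x)) → ε x ≠ 0 := by
    intro x hxB hreach hεz
    have h1 : x ≠ x₀ := fun h => by rw [h, hεx₀] at hεz; exact one_ne_zero hεz
    have h2 : x ≠ ι x₀ := fun h => by
      rw [h, hειx₀] at hεz
      norm_num at hεz
    have h3 : x ∉ L := fun h => by
      rw [hεL x h] at hεz
      norm_num at hεz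
    have h4 : ι x ∉ L := fun h => by
      have ha := hεanti x hxB
      rw [hεL (ι x) h, hεz] at ha
      norm_num at ha
    have hconn1 : ∀ v w, FlagAux.Reach π ι (B \ {x, ι x}) v w := fun v w =>
      FlagAux.reach_detour hιB hιinv hxB hreach (hconnR v w)
    have hx₀mem : x₀ ∈ B \ ({x, ι x} : Finset F) := by
      simp only [Finset.mem_sdiff, Finset.mem_insert, Finset.mem_singleton, not_or]
      refine ⟨hx₀B, fun h => h1 h.symm, fun h => h2 ?_⟩
      exact ((by rw [h, hιinv x hxB]) : ι x₀ = x).symm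
    have hdet2 : FlagAux.Reach π ι ((B \ {x, ι x}) \ {x₀, ι x₀}) (π x₀) (π (ι x₀)) := by
      refine FlagAux.walk_reach (FlagAux.walk_mono hLwalk ?_)
      intro t ht
      have htB' := hLB' t ht
      simp only [hB', Finset.mem_sdiff, Finset.mem_insert, Finset.mem_singleton, not_or] at htB' ⊢
      refine ⟨⟨htB'.1, fun h => h3 (h ▸ ht), fun h => h4 ?_⟩, htB'.2⟩
      rw [← h]
      exact ht
    have hconn2 : ∀ v w, FlagAux.Reach π ι ((B \ {x, ι x}) \ {x₀, ι x₀}) v w := fun v w =>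
      FlagAux.reach_detour (FlagAux.sdiff_pair_cl hιB hιinv hxB)
        (FlagAux.sdiff_pair_inv hιinv) hx₀mem hdet2 (hconn1 v w)
    have hcount := FlagAux.conn_card (π := π)
      (FlagAux.sdiff_pair_cl (FlagAux.sdiff_pair_cl hιB hιinv hxB)
        (FlagAux.sdiff_pair_inv hιinv) hx₀mem)
      (FlagAux.sdiff_pair_inv (FlagAux.sdiff_pair_inv hιinv))
      (fun z hz => hιne z (Finset.mem_sdiff.1 (Finset.mem_sdiff.1 hz).1).1) hconn2
    have hpair1 : ({x, ι x} : Finset F) ⊆ B := by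
      intro t ht
      rcases Finset.mem_insert.1 ht with rfl | ht
      · exact hxB
      · rw [Finset.mem_singleton.1 ht]
        exact hιB x hxB
    have hιx₀mem : ι x₀ ∈ B \ ({x, ι x} : Finset F) := by
      simp only [Finset.mem_sdiff, Finset.mem_insert, Finset.mem_singleton, not_or]
      refine ⟨hιB x₀ hx₀B, fun h => h2 h.symm, fun h => h1 ?_⟩
      rw [← hιinv x₀ hx₀B, h, hιinv x hxB]
    have hpair2 : ({x₀, ι x₀} : Finset F) ⊆ B \ ({x, ι x} : Finset F) := by
      intro t ht
      rcases Finset.mem_insert.1 ht with rfl | ht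
      · exact hx₀mem
      · rw [Finset.mem_singleton.1 ht]
        exact hιx₀mem
    have hc1 : (B \ ({x, ι x} : Finset F)).card = B.card - 2 := by
      rw [Finset.card_sdiff_of_subset hpair1, Finset.card_pair (Ne.symm (hιne x hxB))]
    have hc2 : ((B \ ({x, ι x} : Finset F)) \ ({x₀, ι x₀} : Finset F)).card
        = B.card - 4 := by
      rw [Finset.card_sdiff_of_subset hpair2, Finset.card_pair (Ne.symm hx₀ιne), hc1]
      omega
    have hge : ({x₀, ι x₀} : Finset F).card ≤ (B \ ({x, ι x} : Finset F)).card :=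
      Finset.card_le_card hpair2
    rw [Finset.card_pair (Ne.symm hx₀ιne)] at hge
    omega
  -- the annihilator subspace
  set Cset : Set F :=
    {x : F | x ∈ B ∧ FlagAux.Reach π ι (B \ {x, ι x}) (π x) (π (ι x))} with hCset
  set T : Set (Fin n → ℂ) := toC '' (d '' Cset) with hT
  set U : Submodule ℂ (Fin n → ℂ) := Submodule.span ℂ T with hU
  set Ann : Submodule ℂ M := U.dualAnnihilator with hAnn
  set Φ : M →ₗ[ℂ] (F → M) :=
    { toFun := fun ξ => fun z => ε z • ξ
      map_add' := by
        intro a b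
        funext z
        simp [smul_add]
      map_smul' := by
        intro c a
        funext z
        exact smul_comm (ε z) c a } with hΦ
  set W := compatibleNumberings ℂ π B ι M ⊓ evalConditions B n d with hW
  have hΦapp : ∀ (ξ : M) (z : F), Φ ξ z = ε z • ξ := fun ξ z => rfl
  have hΦW : ∀ ξ ∈ Ann, Φ ξ ∈ W := by
    intro ξ hξ
    refine ⟨⟨fun z hz => ?_, fun v => ?_, fun z hz => ?_⟩, fun x hx => ?_⟩
    · rw [hΦapp, hε0 z hz, zero_smul]
    · simp only [hΦapp]
      rw [← Finset.sum_smul, hεdiv v, zero_smul]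
    · simp only [hΦapp]
      rw [← add_smul, hεanti z hz, zero_smul]
    · rw [hΦapp]
      by_cases hεx : ε x = 0
      · simp [hεx]
      · obtain ⟨hxB, hxr⟩ := hεsupp x hεx
        have hmem : (fun i => ((d x) i : ℂ)) ∈ U := by
          refine Submodule.subset_span ?_
          exact ⟨d x, ⟨x, ⟨hxB, hxr⟩, rfl⟩, rfl⟩
        have h0 := (Submodule.mem_dualAnnihilator _).1 hξ _ hmem
        rw [LinearMap.smul_apply, h0, smul_zero]
  have hWrep : ∀ f ∈ W, f = Φ (f x₀) ∧ f x₀ ∈ Ann := by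
    intro f hf
    obtain ⟨hfc, hfe⟩ := hf
    constructor
    · funext z
      rw [hΦapp]
      exact hrep f hfc z
    · rw [hAnn, Submodule.mem_dualAnnihilator]
      intro u hu
      have hTker : ∀ u ∈ T, f x₀ u = 0 := by
        rintro - ⟨-, ⟨x, ⟨hxB, hxr⟩, rfl⟩, rfl⟩
        have hεx : ε x ≠ 0 := hCsupp x hxB hxr
        have heq := hrep f hfc x
        have heval := hfe x hxB
        rw [heq] at heval
        have : ε x • (f x₀) (toC (d x)) = 0 := heval
        rcases smul_eq_zero.1 this with h | h
        · exact absurd h hεx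
        · exact h
      have hle : U ≤ LinearMap.ker (f x₀) := by
        rw [hU, Submodule.span_le]
        intro u hu
        exact LinearMap.mem_ker.2 (hTker u hu)
      exact hle hu
  have hWeq : W = Submodule.map Φ Ann := by
    ext f
    constructor
    · intro hf
      obtain ⟨heq, hann⟩ := hWrep f hf
      exact ⟨f x₀, hann, heq.symm⟩
    · rintro ⟨ξ, hξ, rfl⟩
      exact hΦW ξ hξ
  have hΦinj : Function.Injective Φ := by
    intro a b hab
    have h := congrFun hab x₀
    simpa [hΦapp, hεx₀] using h
  have h1 : finrank ℂ ↥W = finrank ℂ ↥Ann := by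
    rw [hWeq]
    exact (Submodule.equivMapOfInjective Φ hΦinj Ann).finrank_eq.symm
  have h2 : finrank ℂ ↥Ann + finrank ℂ ↥U = n := by
    have he : finrank ℂ ((Fin n → ℂ) ⧸ U) = finrank ℂ ↥Ann :=
      (Subspace.quotEquivAnnihilator U).finrank_eq
    have h3 := Submodule.finrank_quotient_add_finrank U
    rw [Module.finrank_fintype_fun_eq_card, Fintype.card_fin] at h3
    omega
  have h4 : finrank ℂ ↥U = finrank ℝ ↥(Submodule.span ℝ (d '' Cset)) := by
    rw [hU, hT, htoC]
    exact complexify_span_finrank (d '' Cset)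
  have hsets : {v : Fin n → ℝ | ∃ x ∈ B,
      (flagGraph π (B \ {x, ι x}) ι).Reachable (π x) (π (ι x)) ∧ d x = v} = d '' Cset := by
    ext v
    constructor
    · rintro ⟨x, hxB, hre, rfl⟩
      exact ⟨x, ⟨hxB, (FlagAux.reachable_iff_reach (FlagAux.sdiff_pair_cl hιB hιinv hxB)
        (FlagAux.sdiff_pair_inv hιinv)).1 hre⟩, rfl⟩
    · rintro ⟨x, ⟨hxB, hre⟩, rfl⟩
      exact ⟨x, hxB, (FlagAux.reachable_iff_reach (FlagAux.sdiff_pair_cl hιB hιinv hxB)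
        (FlagAux.sdiff_pair_inv hιinv)).2 hre, rfl⟩
  rw [hsets]
  rw [← hW] at *
  rw [h1, ← h4]
  omega
end

section
/- Let Γ be a finite trivalent flag graph, M a ℂ-vector space, and f a compatible numbering of Γ with values in M. Then the support of f is a union of loops in the following sense: (a) every bounded flag x with f(x) ≠ 0 belongs to a bounded edge lying on a cycle of Γ (i.e., an edge whose deletion does not increase the number of connected components of the underlying graph), and (b) for every vertex v, the number of flags x with π(x) = v and f(x) ≠ 0 is never equal to exactly one; in particular the subgraph of edges on which f is nonzero has no one-valent end. -/
open Finset

/-- The support of a compatible numbering of a finite trivalent flag graph is a union of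
loops: (a) every bounded flag with nonzero value belongs to an edge lying on a cycle
(its endpoints remain joined after the edge is deleted), and (b) at every vertex the
number of flags carrying a nonzero value is never exactly one, so the support has no
one-valent end. -/
theorem compatibleNumbering_support_union_of_loops
    {V F : Type} [Fintype V] [Fintype F] [DecidableEq V] [DecidableEq F]
    (π : F → V) (B : Finset F) (ι : F → F)
    (htri : ∀ v : V, (Finset.univ.filter (fun x => π x = v)).card = 3)
    (hιB : ∀ x ∈ B, ι x ∈ B)
    (hιinv : ∀ x ∈ B, ι (ι x) = x)
    (hιne : ∀ x ∈ B, ι x ≠ x)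
    (M : Type) [AddCommGroup M] [Module ℂ M]
    (f : F → M) (hf : f ∈ compatibleNumberings ℂ π B ι M) :
    (∀ x ∈ B, f x ≠ 0 →
        (flagGraph π (B \ {x, ι x}) ι).Reachable (π x) (π (ι x))) ∧
    (∀ v : V, ({x | π x = v ∧ f x ≠ 0} : Set F).ncard ≠ 1) := by
  classical
  obtain ⟨hf1, hf2, hf3⟩ := hf
  constructor
  · intro x hxB hfx
    by_contra hnr
    set G := flagGraph π (B \ {x, ι x}) ι with hG
    set C : Finset V := Finset.univ.filter (fun v => G.Reachable (π x) v) with hC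
    have hπx : π x ∈ C := by
      simp only [hC, Finset.mem_filter, Finset.mem_univ, true_and]
      exact SimpleGraph.Reachable.refl _
    have hπιx : π (ι x) ∉ C := by
      simp only [hC, Finset.mem_filter, Finset.mem_univ, true_and]
      exact hnr
    have key : ∀ y ∈ B, y ≠ x → y ≠ ι x → π y ∈ C → π (ι y) ∈ C := by
      intro y hyB hyx hyιx hπy
      by_cases heq : π y = π (ι y)
      · rwa [← heq]
      · have hadj : G.Adj (π y) (π (ι y)) := by
          rw [hG, flagGraph, SimpleGraph.fromRel_adj]
          refine ⟨heq, Or.inl ⟨y, ?_, rfl, rfl⟩⟩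
          simp only [Finset.mem_sdiff, Finset.mem_insert, Finset.mem_singleton]
          exact ⟨hyB, fun h => h.elim hyx hyιx⟩
        simp only [hC, Finset.mem_filter, Finset.mem_univ, true_and] at hπy ⊢
        exact hπy.trans hadj.reachable
    -- sum over all flags whose vertex is in C is zero
    have hsum : ∑ y ∈ Finset.univ.filter (fun y => π y ∈ C), f y = 0 := by
      rw [← Finset.sum_fiberwise_of_maps_to (g := π) (t := C)
        (fun y hy => (Finset.mem_filter.1 hy).2) f]
      refine Finset.sum_eq_zero fun v hv => ?_
      have : (Finset.univ.filter (fun y => π y ∈ C)).filter (fun y => π y = v)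
          = Finset.univ.filter (fun y => π y = v) := by
        ext y
        simp only [Finset.mem_filter, Finset.mem_univ, true_and]
        exact ⟨fun h => h.2, fun h => ⟨h ▸ hv, h⟩⟩
      rw [this, hf2 v]
    have hxs : x ∈ Finset.univ.filter (fun y => π y ∈ C) := by
      simp [hπx]
    rw [← Finset.add_sum_erase _ f hxs] at hsum
    -- the remaining sum vanishes by the involution ι
    have hrest : ∑ y ∈ (Finset.univ.filter (fun y => π y ∈ C)).erase x, f y = 0 := by
      set s := (Finset.univ.filter (fun y => π y ∈ C)).erase x with hs
      have hmem : ∀ y ∈ s, y ≠ x ∧ π y ∈ C := by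
        intro y hy
        rw [hs, Finset.mem_erase, Finset.mem_filter] at hy
        exact ⟨hy.1, hy.2.2⟩
      have hyne : ∀ y ∈ s, y ∈ B → y ≠ ι x := by
        intro y hy hyB h
        exact hπιx (h ▸ (hmem y hy).2)
      refine Finset.sum_involution (fun y _ => if y ∈ B then ι y else y)
        (fun y hy => ?_) (fun y hy h => ?_) (fun y hy => ?_) (fun y hy => ?_)
      · by_cases hyB : y ∈ B
        · simp only [hyB, if_true]; exact hf3 y hyB
        · simp only [hyB, if_false, hf1 y hyB, add_zero]
      · by_cases hyB : y ∈ B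
        · simp only [hyB, if_true]; exact hιne y hyB
        · exact absurd (hf1 y hyB) h
      · obtain ⟨hyx, hπy⟩ := hmem y hy
        by_cases hyB : y ∈ B
        · simp only [hyB, if_true, hs, Finset.mem_erase, Finset.mem_filter,
            Finset.mem_univ, true_and]
          constructor
          · intro h
            have : y = ι x := by rw [← hιinv y hyB, h]
            exact hyne y hy hyB this
          · exact key y hyB hyx (hyne y hy hyB) hπy
        · simpa only [hyB, if_false] using hy
      · by_cases hyB : y ∈ B
        · simp only [hyB, if_true, hιB y hyB, if_true]
          exact hιinv y hyB
        · simp only [hyB, if_false]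
    rw [hrest, add_zero] at hsum
    exact hfx hsum
  · intro v hone
    have hset : ({x | π x = v ∧ f x ≠ 0} : Set F)
        = ↑(Finset.univ.filter (fun x => π x = v ∧ f x ≠ 0)) := by
      ext y; simp
    rw [hset, Set.ncard_coe_finset, Finset.card_eq_one] at hone
    obtain ⟨a, ha⟩ := hone
    have haa : a ∈ Finset.univ.filter (fun x => π x = v ∧ f x ≠ 0) := by
      rw [ha]; exact Finset.mem_singleton_self a
    rw [Finset.mem_filter] at haa
    have : ∑ y ∈ Finset.univ.filter (fun y => π y = v), f y = f a := by
      rw [← Finset.sum_filter_ne_zero]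
      have : (Finset.univ.filter (fun y => π y = v)).filter (fun y => f y ≠ 0)
          = {a} := by
        rw [← ha]
        ext y
        simp only [Finset.mem_filter, Finset.mem_univ, true_and, and_assoc]
      rw [this, Finset.sum_singleton]
    rw [hf2 v] at this
    exact haa.2.2 this.symm
end

section
/- Fix a, b ∈ ℝ and nonzero complex numbers k, l, m. For each real τ > 1, let V_τ = {(x, y) ∈ ℂ² : x ≠ 0, y ≠ 0, and k·τ^a·x + l·τ^b·y + m = 0}. Then a point p ∈ ℝ² lies on the tropical line T_{a,b} if and only if there exist a sequence of reals τ_n with τ_n → ∞ and points (x_n, y_n) ∈ V_{τ_n} such that Log_{τ_n}(x_n, y_n) → p. In other words, the limit as τ → ∞ of the sets Log_τ(V_τ) is exactly the tropical curve defined by the tropical polynomial max{a + X, b + Y, 0}. -/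
open Filter Topology

/-- The coordinatewise logarithm map with base `τ`:
`Log_τ (x, y) = (log |x| / log τ, log |y| / log τ)`. -/
noncomputable def logMap (τ : ℝ) (z : ℂ × ℂ) : ℝ × ℝ :=
  (Real.log ‖z.1‖ / Real.log τ, Real.log ‖z.2‖ / Real.log τ)

/-- The curve `V_τ = {(x, y) ∈ (ℂ*)² : k·τ^a·x + l·τ^b·y + m = 0}`. -/
def lineSet (k l m : ℂ) (a b τ : ℝ) : Set (ℂ × ℂ) :=
  {z | z.1 ≠ 0 ∧ z.2 ≠ 0 ∧
    k * ((τ ^ a : ℝ) : ℂ) * z.1 + l * ((τ ^ b : ℝ) : ℂ) * z.2 + m = 0}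

/-- The tropical line `T_{a,b}`: the corner locus of the tropical polynomial
`max {a + X, b + Y, 0}`, i.e. the points where at least two of the three terms attain
the maximum. -/
def tropLine (a b : ℝ) (p : ℝ × ℝ) : Prop :=
  (a + p.1 = b + p.2 ∧ 0 ≤ a + p.1) ∨
  (a + p.1 = 0 ∧ b + p.2 ≤ 0) ∨
  (b + p.2 = 0 ∧ a + p.1 ≤ 0)

/-- A constant divided by `log (τ n)` tends to `0` when `τ n → ∞`. -/
lemma trop_const_div_log (τ : ℕ → ℝ) (hτ : Tendsto τ atTop atTop) (c : ℝ) :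
    Tendsto (fun n => c / Real.log (τ n)) atTop (𝓝 0) := by
  have h := (Real.tendsto_log_atTop.comp hτ).inv_tendsto_atTop
  have := (tendsto_const_nhds (x := c) (f := atTop (α := ℕ))).mul h
  simpa [div_eq_mul_inv] using this

/-- Squeeze lemma for log ratios: if `c1·τ^r ≤ u ≤ c2·τ^r`, then
`log u / log τ → r`. -/
lemma trop_squeeze_log (τ u : ℕ → ℝ) (hτ1 : ∀ n, 1 < τ n) (hτ : Tendsto τ atTop atTop)
    {c1 c2 r : ℝ} (hc1 : 0 < c1)
    (h1 : ∀ n, c1 * τ n ^ r ≤ u n) (h2 : ∀ n, u n ≤ c2 * τ n ^ r) :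
    Tendsto (fun n => Real.log (u n) / Real.log (τ n)) atTop (𝓝 r) := by
  have hτpos : ∀ n, 0 < τ n := fun n => lt_trans one_pos (hτ1 n)
  have hlogpos : ∀ n, 0 < Real.log (τ n) := fun n => Real.log_pos (hτ1 n)
  have hrp : ∀ n, 0 < τ n ^ r := fun n => Real.rpow_pos_of_pos (hτpos n) r
  have hupos : ∀ n, 0 < u n := fun n => lt_of_lt_of_le (mul_pos hc1 (hrp n)) (h1 n)
  have hc2 : 0 < c2 := by
    have := (h1 0).trans (h2 0)
    nlinarith [hrp 0]
  have hlow : ∀ n, Real.log c1 / Real.log (τ n) + r ≤ Real.log (u n) / Real.log (τ n) := by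
    intro n
    have hlog : Real.log c1 + r * Real.log (τ n) ≤ Real.log (u n) := by
      have := (Real.log_le_log_iff (mul_pos hc1 (hrp n)) (hupos n)).2 (h1 n)
      rwa [Real.log_mul hc1.ne' (hrp n).ne', Real.log_rpow (hτpos n)] at this
    have := (div_le_div_iff_of_pos_right (hlogpos n)).2 hlog
    rwa [add_div, mul_div_assoc, div_self (hlogpos n).ne', mul_one] at this
  have hhigh : ∀ n, Real.log (u n) / Real.log (τ n) ≤ Real.log c2 / Real.log (τ n) + r := by
    intro n
    have hlog : Real.log (u n) ≤ Real.log c2 + r * Real.log (τ n) := by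
      have := (Real.log_le_log_iff (hupos n) (mul_pos hc2 (hrp n))).2 (h2 n)
      rwa [Real.log_mul hc2.ne' (hrp n).ne', Real.log_rpow (hτpos n)] at this
    have := (div_le_div_iff_of_pos_right (hlogpos n)).2 hlog
    rwa [add_div, mul_div_assoc, div_self (hlogpos n).ne', mul_one] at this
  have hl : Tendsto (fun n => Real.log c1 / Real.log (τ n) + r) atTop (𝓝 r) := by
    simpa using (trop_const_div_log τ hτ (Real.log c1)).add (tendsto_const_nhds (x := r))
  have hr : Tendsto (fun n => Real.log c2 / Real.log (τ n) + r) atTop (𝓝 r) := by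
    simpa using (trop_const_div_log τ hτ (Real.log c2)).add (tendsto_const_nhds (x := r))
  exact tendsto_of_tendsto_of_tendsto_of_le_of_le hl hr hlow hhigh

/-- Trichotomy: from the three "each term is dominated by the max of the others"
inequalities, the maximum is attained at least twice. -/
lemma trop_trich {α β : ℝ} (h1 : α ≤ max β 0) (h2 : β ≤ max α 0) (h3 : (0:ℝ) ≤ max α β) :
    (α = β ∧ 0 ≤ α) ∨ (α = 0 ∧ β ≤ 0) ∨ (β = 0 ∧ α ≤ 0) := by
  rcases le_total α 0 with hα | hα <;> rcases le_total β 0 with hβ | hβ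
  · rcases max_choice α β with h | h <;>
      [ exact Or.inr (Or.inl ⟨le_antisymm hα (h ▸ h3), hβ⟩);
        exact Or.inr (Or.inr ⟨le_antisymm hβ (h ▸ h3), hα⟩) ]
  · exact Or.inr (Or.inr ⟨le_antisymm (by simpa [max_eq_right hα] using h2) hβ, hα⟩)
  · exact Or.inr (Or.inl ⟨le_antisymm (by simpa [max_eq_right hβ] using h1) hα, hβ⟩)
  · exact Or.inl ⟨le_antisymm (by simpa [max_eq_left hβ] using h1)
      (by simpa [max_eq_left hα] using h2), hα⟩

lemma trop_log_max {x y : ℝ} (hx : 0 < x) (hy : 0 < y) :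
    Real.log (max x y) = max (Real.log x) (Real.log y) := by
  rcases le_total x y with h | h
  · rw [max_eq_right h, max_eq_right ((Real.log_le_log_iff hx hy).2 h)]
  · rw [max_eq_left h, max_eq_left ((Real.log_le_log_iff hy hx).2 h)]

/-- If `U ≤ V + W` pointwise and the log ratios converge, the limit of the first one is
dominated by the max of the other two. -/
lemma trop_tendsto_le_max {τ U V W : ℕ → ℝ} (hτ1 : ∀ n, 1 < τ n)
    (hτ : Tendsto τ atTop atTop)
    (hU : ∀ n, 0 < U n) (hV : ∀ n, 0 < V n) (hW : ∀ n, 0 < W n)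
    (hle : ∀ n, U n ≤ V n + W n)
    {α β γ : ℝ}
    (hA : Tendsto (fun n => Real.log (U n) / Real.log (τ n)) atTop (𝓝 α))
    (hB : Tendsto (fun n => Real.log (V n) / Real.log (τ n)) atTop (𝓝 β))
    (hC : Tendsto (fun n => Real.log (W n) / Real.log (τ n)) atTop (𝓝 γ)) :
    α ≤ max β γ := by
  have hlogpos : ∀ n, 0 < Real.log (τ n) := fun n => Real.log_pos (hτ1 n)
  have hbound : ∀ n, Real.log (U n) / Real.log (τ n) ≤
      Real.log 2 / Real.log (τ n) +
        max (Real.log (V n) / Real.log (τ n)) (Real.log (W n) / Real.log (τ n)) := by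
    intro n
    have hmaxpos : 0 < max (V n) (W n) := lt_max_of_lt_left (hV n)
    have h2 : U n ≤ 2 * max (V n) (W n) := by
      rcases le_total (V n) (W n) with h | h
      · rw [max_eq_right h]; linarith [hle n]
      · rw [max_eq_left h]; linarith [hle n]
    have hlog : Real.log (U n) ≤ Real.log 2 + max (Real.log (V n)) (Real.log (W n)) := by
      have := (Real.log_le_log_iff (hU n) (by positivity)).2 h2
      rwa [Real.log_mul two_ne_zero hmaxpos.ne', trop_log_max (hV n) (hW n)] at this
    calc Real.log (U n) / Real.log (τ n)
        ≤ (Real.log 2 + max (Real.log (V n)) (Real.log (W n))) / Real.log (τ n) :=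
          (div_le_div_iff_of_pos_right (hlogpos n)).2 hlog
      _ = _ := by rw [add_div, max_div_div_right (hlogpos n).le]
  have hrhs : Tendsto (fun n => Real.log 2 / Real.log (τ n) +
      max (Real.log (V n) / Real.log (τ n)) (Real.log (W n) / Real.log (τ n)))
      atTop (𝓝 (max β γ)) := by
    simpa using (trop_const_div_log τ hτ (Real.log 2)).add (hB.max hC)
  exact le_of_tendsto_of_tendsto' hA hrhs hbound

/-- Forward construction: given `U V : ℕ → ℂ` with `U + V + m = 0` and two-sided bounds
`|U| ≈ τ^(a+p₁)`, `|V| ≈ τ^(b+p₂)`, we get the desired family of points. -/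
lemma trop_forward_aux (a b : ℝ) (k l m : ℂ) (hk : k ≠ 0) (hl : l ≠ 0) (p : ℝ × ℝ)
    (τ : ℕ → ℝ) (hτ1 : ∀ n, 1 < τ n) (hτ : Tendsto τ atTop atTop)
    (U V : ℕ → ℂ) (hsum : ∀ n, U n + V n + m = 0)
    {c1 c2 d1 d2 : ℝ} (hc1 : 0 < c1) (hd1 : 0 < d1)
    (hU1 : ∀ n, c1 * τ n ^ (a + p.1) ≤ ‖(U n)‖)
    (hU2 : ∀ n, ‖(U n)‖ ≤ c2 * τ n ^ (a + p.1))
    (hV1 : ∀ n, d1 * τ n ^ (b + p.2) ≤ ‖(V n)‖)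
    (hV2 : ∀ n, ‖(V n)‖ ≤ d2 * τ n ^ (b + p.2)) :
    ∃ (τ' : ℕ → ℝ) (z : ℕ → ℂ × ℂ),
      (∀ n, 1 < τ' n) ∧ Tendsto τ' atTop atTop ∧
      (∀ n, z n ∈ lineSet k l m a b (τ' n)) ∧
      Tendsto (fun n => logMap (τ' n) (z n)) atTop (𝓝 p) := by
  have hτpos : ∀ n, 0 < τ n := fun n => lt_trans one_pos (hτ1 n)
  have hka : ∀ n, (k * ((τ n ^ a : ℝ) : ℂ)) ≠ 0 := fun n =>
    mul_ne_zero hk (by exact_mod_cast (Real.rpow_pos_of_pos (hτpos n) a).ne')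
  have hlb : ∀ n, (l * ((τ n ^ b : ℝ) : ℂ)) ≠ 0 := fun n =>
    mul_ne_zero hl (by exact_mod_cast (Real.rpow_pos_of_pos (hτpos n) b).ne')
  have hUne : ∀ n, U n ≠ 0 := by
    intro n h
    have := hU1 n
    rw [h, norm_zero] at this
    nlinarith [Real.rpow_pos_of_pos (hτpos n) (a + p.1)]
  have hVne : ∀ n, V n ≠ 0 := by
    intro n h
    have := hV1 n
    rw [h, norm_zero] at this
    nlinarith [Real.rpow_pos_of_pos (hτpos n) (b + p.2)]
  set x : ℕ → ℂ := fun n => U n / (k * ((τ n ^ a : ℝ) : ℂ)) with hx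
  set y : ℕ → ℂ := fun n => V n / (l * ((τ n ^ b : ℝ) : ℂ)) with hy
  refine ⟨τ, fun n => (x n, y n), hτ1, hτ, ?_, ?_⟩
  · intro n
    refine ⟨div_ne_zero (hUne n) (hka n), div_ne_zero (hVne n) (hlb n), ?_⟩
    show k * ((τ n ^ a : ℝ) : ℂ) * x n + l * ((τ n ^ b : ℝ) : ℂ) * y n + m = 0
    rw [hx, hy, mul_comm (k * ((τ n ^ a : ℝ) : ℂ)), div_mul_cancel₀ _ (hka n),
      mul_comm (l * ((τ n ^ b : ℝ) : ℂ)), div_mul_cancel₀ _ (hlb n)]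
    exact hsum n
  · have habsx : ∀ n, ‖(x n)‖ =
        ‖(U n)‖ / (‖k‖ * τ n ^ a) := by
      intro n
      rw [hx]
      simp [norm_div, norm_mul, Complex.norm_real, Real.norm_eq_abs,
        abs_of_pos (Real.rpow_pos_of_pos (hτpos n) a)]
    have habsy : ∀ n, ‖(y n)‖ =
        ‖(V n)‖ / (‖l‖ * τ n ^ b) := by
      intro n
      rw [hy]
      simp [norm_div, norm_mul, Complex.norm_real, Real.norm_eq_abs,
        abs_of_pos (Real.rpow_pos_of_pos (hτpos n) b)]
    have hkpos : 0 < ‖k‖ := norm_pos_iff.mpr hk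
    have hlpos : 0 < ‖l‖ := norm_pos_iff.mpr hl
    have hsplit : ∀ (n : ℕ) (c r e : ℝ), c * τ n ^ (e + r) / (‖k‖ * τ n ^ e)
        = (c / ‖k‖) * τ n ^ r := by
      intro n c r e
      rw [Real.rpow_add (hτpos n)]
      field_simp [(Real.rpow_pos_of_pos (hτpos n) e).ne']
    have hsplitl : ∀ (n : ℕ) (c r e : ℝ), c * τ n ^ (e + r) / (‖l‖ * τ n ^ e)
        = (c / ‖l‖) * τ n ^ r := by
      intro n c r e
      rw [Real.rpow_add (hτpos n)]
      field_simp [(Real.rpow_pos_of_pos (hτpos n) e).ne']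
    have hx1 : Tendsto (fun n => Real.log (‖(x n)‖) / Real.log (τ n))
        atTop (𝓝 p.1) := by
      apply trop_squeeze_log τ _ hτ1 hτ (div_pos hc1 hkpos)
      · intro n
        rw [habsx n, ← hsplit n c1 p.1 a]
        exact (div_le_div_iff_of_pos_right (mul_pos hkpos (Real.rpow_pos_of_pos (hτpos n) a))).2 (hU1 n)
      · intro n
        rw [habsx n, ← hsplit n c2 p.1 a]
        exact (div_le_div_iff_of_pos_right (mul_pos hkpos (Real.rpow_pos_of_pos (hτpos n) a))).2 (hU2 n)
    have hy1 : Tendsto (fun n => Real.log (‖(y n)‖) / Real.log (τ n))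
        atTop (𝓝 p.2) := by
      apply trop_squeeze_log τ _ hτ1 hτ (div_pos hd1 hlpos)
      · intro n
        rw [habsy n, ← hsplitl n d1 p.2 b]
        exact (div_le_div_iff_of_pos_right (mul_pos hlpos (Real.rpow_pos_of_pos (hτpos n) b))).2 (hV1 n)
      · intro n
        rw [habsy n, ← hsplitl n d2 p.2 b]
        exact (div_le_div_iff_of_pos_right (mul_pos hlpos (Real.rpow_pos_of_pos (hτpos n) b))).2 (hV2 n)
    exact hx1.prodMk_nhds hy1

/-- Tropicalization of the family of lines `k·τ^a·x + l·τ^b·y + m = 0`: a point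
`p ∈ ℝ²` lies on the tropical line `T_{a,b}` if and only if it is a limit of points
`Log_{τ_n}(x_n, y_n)` with `(x_n, y_n) ∈ V_{τ_n}` and `τ_n → ∞`. -/
theorem tropicalization_of_lines (a b : ℝ) (k l m : ℂ)
    (hk : k ≠ 0) (hl : l ≠ 0) (hm : m ≠ 0) (p : ℝ × ℝ) :
    tropLine a b p ↔
      ∃ (τ : ℕ → ℝ) (z : ℕ → ℂ × ℂ),
        (∀ n, 1 < τ n) ∧
        Tendsto τ atTop atTop ∧
        (∀ n, z n ∈ lineSet k l m a b (τ n)) ∧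
        Tendsto (fun n => logMap (τ n) (z n)) atTop (𝓝 p) := by
  have hmpos : 0 < ‖m‖ := norm_pos_iff.mpr hm
  constructor
  · intro hp
    set τ : ℕ → ℝ := fun n => (n : ℝ) + 2 with hτdef
    have hτ1 : ∀ n, 1 < τ n := by
      intro n
      have : (0:ℝ) ≤ (n : ℝ) := Nat.cast_nonneg n
      simp only [hτdef]
      linarith
    have hτ : Tendsto τ atTop atTop :=
      tendsto_atTop_add_const_right _ 2 tendsto_natCast_atTop_atTop
    have hτpos : ∀ n, 0 < τ n := fun n => lt_trans one_pos (hτ1 n)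
    rcases hp with ⟨hEq, hM⟩ | ⟨hA, hB⟩ | ⟨hB, hA⟩
    · -- case a + p.1 = b + p.2 ≥ 0
      set t : ℕ → ℝ := fun n => τ n ^ (a + p.1) with ht
      have ht1 : ∀ n, 1 ≤ t n := by
        intro n
        have := Real.rpow_le_rpow_of_exponent_le (le_of_lt (hτ1 n)) hM
        rwa [Real.rpow_zero] at this
      have habsw : ∀ n, t n ≤ ‖(-1 + Complex.I * (t n : ℂ))‖ ∧
          ‖(-1 + Complex.I * (t n : ℂ))‖ ≤ 2 * t n := by
        intro n
        have him : (-1 + Complex.I * ((t n : ℝ) : ℂ)).im = t n := by simp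
        have hre : (-1 + Complex.I * ((t n : ℝ) : ℂ)).re = -1 := by simp
        have ht0 : (0:ℝ) ≤ t n := by linarith [ht1 n]
        constructor
        · calc t n = |(-1 + Complex.I * ((t n : ℝ) : ℂ)).im| := by
                rw [him, abs_of_nonneg ht0]
            _ ≤ _ := Complex.abs_im_le_norm _
        · calc ‖(-1 + Complex.I * ((t n : ℝ) : ℂ))‖
              ≤ |(-1 + Complex.I * ((t n : ℝ) : ℂ)).re| +
                |(-1 + Complex.I * ((t n : ℝ) : ℂ)).im| := Complex.norm_le_abs_re_add_abs_im _
            _ = 1 + t n := by rw [hre, him, abs_of_nonneg ht0]; norm_num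
            _ ≤ 2 * t n := by linarith [ht1 n]
      have habsw' : ∀ n, t n ≤ ‖(-1 - Complex.I * (t n : ℂ))‖ ∧
          ‖(-1 - Complex.I * (t n : ℂ))‖ ≤ 2 * t n := by
        intro n
        have him : (-1 - Complex.I * ((t n : ℝ) : ℂ)).im = -t n := by simp
        have hre : (-1 - Complex.I * ((t n : ℝ) : ℂ)).re = -1 := by simp
        have ht0 : (0:ℝ) ≤ t n := by linarith [ht1 n]
        constructor
        · calc t n = |(-1 - Complex.I * ((t n : ℝ) : ℂ)).im| := by
                rw [him, abs_neg, abs_of_nonneg ht0]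
            _ ≤ _ := Complex.abs_im_le_norm _
        · calc ‖(-1 - Complex.I * ((t n : ℝ) : ℂ))‖
              ≤ |(-1 - Complex.I * ((t n : ℝ) : ℂ)).re| +
                |(-1 - Complex.I * ((t n : ℝ) : ℂ)).im| := Complex.norm_le_abs_re_add_abs_im _
            _ = 1 + t n := by
                rw [hre, him, abs_neg (t n), abs_of_nonneg ht0]; norm_num
            _ ≤ 2 * t n := by linarith [ht1 n]
      refine trop_forward_aux a b k l m hk hl p τ hτ1 hτ
        (fun n => m * (-1 + Complex.I * ((t n : ℝ) : ℂ)) / 2)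
        (fun n => m * (-1 - Complex.I * ((t n : ℝ) : ℂ)) / 2)
        (fun n => by ring)
        (c1 := ‖m‖ / 2) (c2 := ‖m‖)
        (d1 := ‖m‖ / 2) (d2 := ‖m‖)
        (by positivity) (by positivity) ?_ ?_ ?_ ?_
      · intro n
        rw [norm_div, norm_mul, Complex.norm_two]
        have := (habsw n).1
        nlinarith
      · intro n
        rw [norm_div, norm_mul, Complex.norm_two]
        have := (habsw n).2
        nlinarith
      · intro n
        rw [norm_div, norm_mul, Complex.norm_two, ← hEq]
        have := (habsw' n).1
        nlinarith
      · intro n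
        rw [norm_div, norm_mul, Complex.norm_two, ← hEq]
        have := (habsw' n).2
        nlinarith
    · -- case a + p.1 = 0, b + p.2 ≤ 0
      set s : ℕ → ℝ := fun n => τ n ^ (b + p.2) with hs
      have hs0 : ∀ n, 0 < s n := fun n => Real.rpow_pos_of_pos (hτpos n) _
      have hs1 : ∀ n, s n ≤ 1 := fun n =>
        Real.rpow_le_one_of_one_le_of_nonpos (le_of_lt (hτ1 n)) hB
      set c : ℕ → ℝ := fun n => s n / ‖m‖ with hc
      have hc0 : ∀ n, 0 < c n := fun n => div_pos (hs0 n) hmpos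
      have hmc : ∀ n, ‖m‖ * c n = s n := fun n => by
        rw [hc]; field_simp
      have habsV : ∀ n, ‖(m * Complex.I * ((c n : ℝ) : ℂ))‖ = s n := by
        intro n
        rw [norm_mul, norm_mul, Complex.norm_I, mul_one, Complex.norm_real, Real.norm_eq_abs,
          abs_of_pos (hc0 n), hmc n]
      have hwre : ∀ n, ((1 : ℂ) + Complex.I * ((c n : ℝ) : ℂ)).re = 1 := by
        intro n; simp
      have hwim : ∀ n, ((1 : ℂ) + Complex.I * ((c n : ℝ) : ℂ)).im = c n := by
        intro n; simp
      have hw1 : ∀ n, 1 ≤ ‖(1 + Complex.I * ((c n : ℝ) : ℂ))‖ := by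
        intro n
        calc (1:ℝ) = |((1 : ℂ) + Complex.I * ((c n : ℝ) : ℂ)).re| := by
              rw [hwre n]; norm_num
          _ ≤ _ := Complex.abs_re_le_norm _
      have hw2 : ∀ n, ‖(1 + Complex.I * ((c n : ℝ) : ℂ))‖ ≤ 1 + c n := by
        intro n
        calc ‖(1 + Complex.I * ((c n : ℝ) : ℂ))‖
            ≤ |((1 : ℂ) + Complex.I * ((c n : ℝ) : ℂ)).re| +
              |((1 : ℂ) + Complex.I * ((c n : ℝ) : ℂ)).im| := Complex.norm_le_abs_re_add_abs_im _
          _ = 1 + c n := by rw [hwre n, hwim n, abs_of_pos (hc0 n)]; norm_num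
      have habsU : ∀ n, ‖(-m * (1 + Complex.I * ((c n : ℝ) : ℂ)))‖
          = ‖m‖ * ‖(1 + Complex.I * ((c n : ℝ) : ℂ))‖ := by
        intro n; rw [norm_mul, norm_neg]
      refine trop_forward_aux a b k l m hk hl p τ hτ1 hτ
        (fun n => -m * (1 + Complex.I * ((c n : ℝ) : ℂ)))
        (fun n => m * Complex.I * ((c n : ℝ) : ℂ))
        (fun n => by ring)
        (c1 := ‖m‖) (c2 := ‖m‖ + 1)
        (d1 := 1) (d2 := 1)
        hmpos one_pos ?_ ?_ ?_ ?_
      · intro n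
        rw [hA, Real.rpow_zero, mul_one, habsU n]
        nlinarith [hw1 n]
      · intro n
        rw [hA, Real.rpow_zero, mul_one, habsU n]
        nlinarith [hw2 n, hmc n, hs1 n, hc0 n]
      · intro n
        rw [one_mul, habsV n]
      · intro n
        rw [one_mul, habsV n]
    · -- case b + p.2 = 0, a + p.1 ≤ 0
      set s : ℕ → ℝ := fun n => τ n ^ (a + p.1) with hs
      have hs0 : ∀ n, 0 < s n := fun n => Real.rpow_pos_of_pos (hτpos n) _
      have hs1 : ∀ n, s n ≤ 1 := fun n =>
        Real.rpow_le_one_of_one_le_of_nonpos (le_of_lt (hτ1 n)) hA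
      set c : ℕ → ℝ := fun n => s n / ‖m‖ with hc
      have hc0 : ∀ n, 0 < c n := fun n => div_pos (hs0 n) hmpos
      have hmc : ∀ n, ‖m‖ * c n = s n := fun n => by
        rw [hc]; field_simp
      have habsV : ∀ n, ‖(m * Complex.I * ((c n : ℝ) : ℂ))‖ = s n := by
        intro n
        rw [norm_mul, norm_mul, Complex.norm_I, mul_one, Complex.norm_real, Real.norm_eq_abs,
          abs_of_pos (hc0 n), hmc n]
      have hwre : ∀ n, ((1 : ℂ) + Complex.I * ((c n : ℝ) : ℂ)).re = 1 := by
        intro n; simp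
      have hwim : ∀ n, ((1 : ℂ) + Complex.I * ((c n : ℝ) : ℂ)).im = c n := by
        intro n; simp
      have hw1 : ∀ n, 1 ≤ ‖(1 + Complex.I * ((c n : ℝ) : ℂ))‖ := by
        intro n
        calc (1:ℝ) = |((1 : ℂ) + Complex.I * ((c n : ℝ) : ℂ)).re| := by
              rw [hwre n]; norm_num
          _ ≤ _ := Complex.abs_re_le_norm _
      have hw2 : ∀ n, ‖(1 + Complex.I * ((c n : ℝ) : ℂ))‖ ≤ 1 + c n := by
        intro n
        calc ‖(1 + Complex.I * ((c n : ℝ) : ℂ))‖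
            ≤ |((1 : ℂ) + Complex.I * ((c n : ℝ) : ℂ)).re| +
              |((1 : ℂ) + Complex.I * ((c n : ℝ) : ℂ)).im| := Complex.norm_le_abs_re_add_abs_im _
          _ = 1 + c n := by rw [hwre n, hwim n, abs_of_pos (hc0 n)]; norm_num
      have habsU : ∀ n, ‖(-m * (1 + Complex.I * ((c n : ℝ) : ℂ)))‖
          = ‖m‖ * ‖(1 + Complex.I * ((c n : ℝ) : ℂ))‖ := by
        intro n; rw [norm_mul, norm_neg]
      refine trop_forward_aux a b k l m hk hl p τ hτ1 hτ
        (fun n => m * Complex.I * ((c n : ℝ) : ℂ))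
        (fun n => -m * (1 + Complex.I * ((c n : ℝ) : ℂ)))
        (fun n => by ring)
        (c1 := 1) (c2 := 1)
        (d1 := ‖m‖) (d2 := ‖m‖ + 1)
        one_pos hmpos ?_ ?_ ?_ ?_
      · intro n
        rw [one_mul, habsV n]
      · intro n
        rw [one_mul, habsV n]
      · intro n
        rw [hB, Real.rpow_zero, mul_one, habsU n]
        nlinarith [hw1 n]
      · intro n
        rw [hB, Real.rpow_zero, mul_one, habsU n]
        nlinarith [hw2 n, hmc n, hs1 n, hc0 n]
  · rintro ⟨τ, z, hτ1, hτ, hz, hlim⟩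
    have hτpos : ∀ n, 0 < τ n := fun n => lt_trans one_pos (hτ1 n)
    have hlogpos : ∀ n, 0 < Real.log (τ n) := fun n => Real.log_pos (hτ1 n)
    set U : ℕ → ℝ := fun n => ‖(k * ((τ n ^ a : ℝ) : ℂ) * (z n).1)‖ with hU
    set V : ℕ → ℝ := fun n => ‖(l * ((τ n ^ b : ℝ) : ℂ) * (z n).2)‖ with hV
    set W : ℕ → ℝ := fun n => ‖m‖ with hW
    have hka : ∀ n, (k * ((τ n ^ a : ℝ) : ℂ)) ≠ 0 := fun n =>
      mul_ne_zero hk (by exact_mod_cast (Real.rpow_pos_of_pos (hτpos n) a).ne')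
    have hlb : ∀ n, (l * ((τ n ^ b : ℝ) : ℂ)) ≠ 0 := fun n =>
      mul_ne_zero hl (by exact_mod_cast (Real.rpow_pos_of_pos (hτpos n) b).ne')
    have hUpos : ∀ n, 0 < U n := fun n =>
      norm_pos_iff.mpr (mul_ne_zero (hka n) (hz n).1)
    have hVpos : ∀ n, 0 < V n := fun n =>
      norm_pos_iff.mpr (mul_ne_zero (hlb n) (hz n).2.1)
    have hWpos : ∀ n, 0 < W n := fun _ => hmpos
    -- triangle inequalities
    have key1 : ∀ n, U n ≤ V n + W n := by
      intro n
      have heq : k * ((τ n ^ a : ℝ) : ℂ) * (z n).1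
          = -(l * ((τ n ^ b : ℝ) : ℂ) * (z n).2 + m) := by
        linear_combination (hz n).2.2
      rw [hU]
      calc ‖(k * ((τ n ^ a : ℝ) : ℂ) * (z n).1)‖
          = ‖(l * ((τ n ^ b : ℝ) : ℂ) * (z n).2 + m)‖ := by
            rw [heq, norm_neg]
        _ ≤ V n + W n := norm_add_le _ _
    have key2 : ∀ n, V n ≤ U n + W n := by
      intro n
      have heq : l * ((τ n ^ b : ℝ) : ℂ) * (z n).2
          = -(k * ((τ n ^ a : ℝ) : ℂ) * (z n).1 + m) := by
        linear_combination (hz n).2.2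
      rw [hV]
      calc ‖(l * ((τ n ^ b : ℝ) : ℂ) * (z n).2)‖
          = ‖(k * ((τ n ^ a : ℝ) : ℂ) * (z n).1 + m)‖ := by
            rw [heq, norm_neg]
        _ ≤ U n + W n := norm_add_le _ _
    have key3 : ∀ n, W n ≤ U n + V n := by
      intro n
      have heq : m = -(k * ((τ n ^ a : ℝ) : ℂ) * (z n).1
          + l * ((τ n ^ b : ℝ) : ℂ) * (z n).2) := by
        linear_combination (hz n).2.2
      rw [hW]
      calc ‖m‖
          = ‖(k * ((τ n ^ a : ℝ) : ℂ) * (z n).1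
              + l * ((τ n ^ b : ℝ) : ℂ) * (z n).2)‖ := by
            rw [heq, norm_neg]
        _ ≤ U n + V n := norm_add_le _ _
    -- limits of the three log-ratios
    have hfst : Tendsto (fun n => Real.log (‖(z n).1‖) / Real.log (τ n))
        atTop (𝓝 p.1) := (continuous_fst.tendsto p).comp hlim
    have hsnd : Tendsto (fun n => Real.log (‖(z n).2‖) / Real.log (τ n))
        atTop (𝓝 p.2) := (continuous_snd.tendsto p).comp hlim
    have hAeq : ∀ n, Real.log (U n) / Real.log (τ n) =
        Real.log (‖k‖) / Real.log (τ n) + a +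
          Real.log (‖(z n).1‖) / Real.log (τ n) := by
      intro n
      have hrpos := Real.rpow_pos_of_pos (hτpos n) a
      simp only [hU]
      rw [norm_mul, norm_mul, Complex.norm_real, Real.norm_eq_abs, abs_of_pos hrpos,
        Real.log_mul (mul_ne_zero (norm_pos_iff.mpr hk).ne' hrpos.ne')
          (norm_pos_iff.mpr (hz n).1).ne',
        Real.log_mul (norm_pos_iff.mpr hk).ne' hrpos.ne',
        Real.log_rpow (hτpos n), add_div, add_div, mul_div_assoc,
        div_self (hlogpos n).ne', mul_one]
    have hBeq : ∀ n, Real.log (V n) / Real.log (τ n) =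
        Real.log (‖l‖) / Real.log (τ n) + b +
          Real.log (‖(z n).2‖) / Real.log (τ n) := by
      intro n
      have hrpos := Real.rpow_pos_of_pos (hτpos n) b
      simp only [hV]
      rw [norm_mul, norm_mul, Complex.norm_real, Real.norm_eq_abs, abs_of_pos hrpos,
        Real.log_mul (mul_ne_zero (norm_pos_iff.mpr hl).ne' hrpos.ne')
          (norm_pos_iff.mpr (hz n).2.1).ne',
        Real.log_mul (norm_pos_iff.mpr hl).ne' hrpos.ne',
        Real.log_rpow (hτpos n), add_div, add_div, mul_div_assoc,
        div_self (hlogpos n).ne', mul_one]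
    have hA : Tendsto (fun n => Real.log (U n) / Real.log (τ n)) atTop (𝓝 (a + p.1)) := by
      rw [tendsto_congr hAeq]
      have := ((trop_const_div_log τ hτ (Real.log (‖k‖))).add
        (tendsto_const_nhds (x := a))).add hfst
      simpa using this
    have hB : Tendsto (fun n => Real.log (V n) / Real.log (τ n)) atTop (𝓝 (b + p.2)) := by
      rw [tendsto_congr hBeq]
      have := ((trop_const_div_log τ hτ (Real.log (‖l‖))).add
        (tendsto_const_nhds (x := b))).add hsnd
      simpa using this
    have hC : Tendsto (fun n => Real.log (W n) / Real.log (τ n)) atTop (𝓝 0) :=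
      trop_const_div_log τ hτ (Real.log (‖m‖))
    exact trop_trich
      (trop_tendsto_le_max hτ1 hτ hUpos hVpos hWpos key1 hA hB hC)
      (trop_tendsto_le_max hτ1 hτ hVpos hUpos hWpos key2 hB hA hC)
      (trop_tendsto_le_max hτ1 hτ hWpos hUpos hVpos key3 hC hA hB)
end

section
/- Let m ≥ 1 and let W ⊆ ℝ^m be an ℝ-linear subspace that is spanned by vectors with rational coordinates. Then the image of the set {z ∈ ℂ^m : the coordinatewise real part of z lies in W and the coordinatewise imaginary part of z lies in W} under the coordinatewise exponential map z ↦ (exp z₁, …, exp z_m) is a closed subset of {v ∈ ℂ^m : v_i ≠ 0 for all i}, equipped with its subspace topology. -/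
open Complex Set

private lemma aux_exp_eq (a b : ℝ) (n : ℤ) (h : a = b + 2 * Real.pi * n) :
    Complex.exp (a * Complex.I) = Complex.exp (b * Complex.I) := by
  subst h
  push_cast
  rw [add_mul, Complex.exp_add, mul_comm ((2:ℂ) * Real.pi) (n:ℂ), mul_assoc,
    Complex.exp_int_mul_two_pi_mul_I, mul_one]


/-- Let `W ⊆ ℝ^m` be a linear subspace spanned by vectors with rational coordinates.
Then the image under the coordinatewise complex exponential of the set of `z ∈ ℂ^m`
whose coordinatewise real part and imaginary part both lie in `W` is a closed subset of
the algebraic torus `{v ∈ ℂ^m : all vᵢ ≠ 0}` in its subspace topology. -/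
theorem image_exp_rational_subspace_isClosed
    (m : ℕ) (hm : 1 ≤ m) (W : Submodule ℝ (Fin m → ℝ))
    (hW : ∃ S : Set (Fin m → ℝ),
      (∀ v ∈ S, ∀ i, ∃ q : ℚ, v i = (q : ℝ)) ∧ W = Submodule.span ℝ S) :
    IsClosed
      ((fun v : {v : Fin m → ℂ // ∀ i, v i ≠ 0} => (v : Fin m → ℂ)) ⁻¹'
        ((fun z : Fin m → ℂ => fun i => Complex.exp (z i)) ''
          {z : Fin m → ℂ | (fun i => (z i).re) ∈ W ∧ (fun i => (z i).im) ∈ W})) := by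
  classical
  obtain ⟨S, hSrat, hSspan⟩ := hW
  -- a finite spanning subset of S
  obtain ⟨t, htS, htspan, htli⟩ := exists_linearIndependent ℝ S
  have htfin : t.Finite := htli.setFinite
  obtain ⟨k, f, hf⟩ := htfin.fin_embedding
  set b0 : Fin k → (Fin m → ℝ) := fun j => f j with hb0
  have hf0 : Set.range b0 = t := hf
  -- scale to integer vectors
  have hrat : ∀ j i, ∃ q : ℚ, b0 j i = (q : ℝ) := by
    intro j i
    exact hSrat (b0 j) (htS (hf0 ▸ Set.mem_range_self j)) i
  choose q hq using hrat
  set d : Fin k → ℕ := fun j => ∏ i, (q j i).den with hd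
  have hdpos : ∀ j, 0 < d j := fun j => Finset.prod_pos fun i _ => (q j i).pos
  set b : Fin k → (Fin m → ℝ) := fun j => (d j : ℝ) • b0 j with hb
  -- integer entries
  have hbint : ∀ j i, ∃ n : ℤ, b j i = (n : ℝ) := by
    intro j i
    have hdvd : (q j i).den ∣ d j := Finset.dvd_prod_of_mem _ (Finset.mem_univ i)
    obtain ⟨c, hc⟩ := hdvd
    refine ⟨(q j i).num * c, ?_⟩
    have h1 : ((d j : ℚ) * q j i : ℚ) = (((q j i).num * c : ℤ) : ℚ) := by
      rw [hc]; push_cast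
      rw [mul_comm ((q j i).den : ℚ) (c:ℚ), mul_assoc, mul_comm _ (q j i), Rat.mul_den_eq_num]
      ring
    have h2 := congrArg (fun x : ℚ => (x : ℝ)) h1
    simp only [hb, Pi.smul_apply, smul_eq_mul, hq j i]
    push_cast at h2 ⊢
    linarith
  choose N hN using hbint
  -- b spans W
  have hb0W : ∀ j, b0 j ∈ W := by
    intro j
    rw [hSspan]
    exact Submodule.subset_span (htS (hf0 ▸ Set.mem_range_self j))
  have hbW : ∀ j, b j ∈ W := fun j => W.smul_mem _ (hb0W j)
  have hspanb : W = Submodule.span ℝ (Set.range b) := by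
    have h1 : W = Submodule.span ℝ (Set.range b0) := by
      rw [hSspan, ← htspan, ← hf0]
    rw [h1]
    apply le_antisymm
    · rw [Submodule.span_le]
      rintro x ⟨j, rfl⟩
      show (b0 j) ∈ (Submodule.span ℝ (Set.range b) : Set (Fin m → ℝ))
      have hrw : b0 j = ((d j : ℝ))⁻¹ • b j := by
        rw [hb]; simp only [smul_smul]
        rw [inv_mul_cancel₀ (by exact_mod_cast (hdpos j).ne')]
        simp
      rw [hrw]
      exact Submodule.smul_mem _ _ (Submodule.subset_span ⟨j, rfl⟩)
    · rw [Submodule.span_le]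
      rintro x ⟨j, rfl⟩
      show (b j) ∈ (Submodule.span ℝ (Set.range b0) : Set (Fin m → ℝ))
      exact Submodule.smul_mem _ _ (Submodule.subset_span ⟨j, rfl⟩)
  -- the compact parallelepiped
  set φ : (Fin m → ℝ) → (Fin m → ℂ) := fun y i => Complex.exp ((y i : ℂ) * Complex.I) with hφ
  set P : Set (Fin m → ℝ) :=
    (fun c : Fin k → ℝ => ∑ j, c j • b j) ''
      (Set.pi Set.univ fun _ => Set.Icc (0:ℝ) (2 * Real.pi)) with hP
  have hPcomp : IsCompact P := by
    apply (isCompact_univ_pi fun _ => isCompact_Icc).image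
    exact continuous_finset_sum _ fun j _ => (continuous_apply j).smul continuous_const
  have hPW : P ⊆ (W : Set (Fin m → ℝ)) := by
    rintro _ ⟨c, -, rfl⟩
    exact Submodule.sum_smul_mem W c fun j _ => hbW j
  -- every w in W has a representative in P mod 2π integer vectors
  have hrep : ∀ w ∈ W, ∃ y ∈ P, φ w = φ y := by
    intro w hw
    rw [hspanb] at hw
    obtain ⟨c, hc⟩ := (Submodule.mem_span_range_iff_exists_fun ℝ).1 hw
    set c' : Fin k → ℝ := fun j => 2 * Real.pi * Int.fract (c j / (2 * Real.pi)) with hc'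
    set y : Fin m → ℝ := ∑ j, c' j • b j with hy
    have hc'mem : c' ∈ Set.pi Set.univ fun _ : Fin k => Set.Icc (0:ℝ) (2 * Real.pi) := by
      rw [Set.mem_univ_pi]
      intro j
      constructor
      · have := Int.fract_nonneg (c j / (2 * Real.pi))
        rw [hc']
        positivity
      · rw [hc']
        have h1 := (Int.fract_lt_one (c j / (2 * Real.pi))).le
        nlinarith [Real.pi_pos]
    have hyP : y ∈ P := ⟨c', hc'mem, rfl⟩
    refine ⟨y, hyP, ?_⟩
    funext i
    apply aux_exp_eq _ _ (∑ j, ⌊c j / (2 * Real.pi)⌋ * N j i)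
    have hw_i : w i = ∑ j, c j * b j i := by
      rw [← hc]; simp
    have hy_i : y i = ∑ j, c' j * b j i := by
      rw [hy]; simp
    rw [hw_i, hy_i]
    push_cast
    rw [Finset.mul_sum, ← Finset.sum_add_distrib]
    apply Finset.sum_congr rfl
    intro j _
    rw [← hN j i]
    have h2π : (2 * Real.pi) ≠ 0 := by positivity
    have key : Int.fract (c j / (2 * Real.pi)) + ⌊c j / (2 * Real.pi)⌋ = c j / (2 * Real.pi) :=
      Int.fract_add_floor _
    have hsplit : c j = c' j + 2 * Real.pi * ⌊c j / (2 * Real.pi)⌋ := by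
      have : c' j + 2 * Real.pi * ⌊c j / (2 * Real.pi)⌋ = c j := by
        rw [hc']
        rw [← mul_add, key]
        field_simp
      linarith
    linear_combination (b j i) * hsplit
  -- the compact set K
  set K : Set (Fin m → ℂ) := φ '' P with hK
  have hφcont : Continuous φ := by
    apply continuous_pi
    intro i
    exact Complex.continuous_exp.comp
      ((Complex.continuous_ofReal.comp (continuous_apply i)).mul continuous_const)
  have hKcomp : IsCompact K := hPcomp.image hφcont
  -- the maps g and h on the subtype
  set X := {v : Fin m → ℂ // ∀ i, v i ≠ 0} with hX
  set g : X → (Fin m → ℝ) := fun v => fun i => Real.log (‖v.1 i‖) with hg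
  set h : X → (Fin m → ℂ) := fun v => fun i => v.1 i / (‖v.1 i‖ : ℂ) with hh
  have hgcont : Continuous g := by
    rw [continuous_iff_continuousAt]
    intro v
    apply continuousAt_pi.2
    intro i
    have habs : ‖v.1 i‖ ≠ 0 := by
      simpa using v.2 i
    have hcont0 : Continuous fun v : X => v.1 i :=
      (continuous_apply i).comp continuous_subtype_val
    have hcont1 : Continuous fun v : X => ‖v.1 i‖ :=
      continuous_norm.comp hcont0
    exact hcont1.continuousAt.log habs
  have hhcont : Continuous h := by
    apply continuous_pi
    intro i
    apply Continuous.div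
    · exact (continuous_apply i).comp continuous_subtype_val
    · exact Complex.continuous_ofReal.comp
        (continuous_norm.comp ((continuous_apply i).comp continuous_subtype_val))
    · intro v
      simpa using v.2 i
  -- set equality
  have hset : ((fun v : X => (v : Fin m → ℂ)) ⁻¹'
        ((fun z : Fin m → ℂ => fun i => Complex.exp (z i)) ''
          {z : Fin m → ℂ | (fun i => (z i).re) ∈ W ∧ (fun i => (z i).im) ∈ W}))
      = g ⁻¹' (W : Set (Fin m → ℝ)) ∩ h ⁻¹' K := by
    ext v
    constructor
    · rintro ⟨z, ⟨hre, him⟩, hz⟩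
      have hz' : ∀ i, Complex.exp (z i) = v.1 i := fun i => congrFun hz i
      constructor
      · have hgv : g v = fun i => (z i).re := by
          funext i
          simp only [hg, ← hz' i, Complex.norm_exp, Real.log_exp]
        show g v ∈ (W : Set (Fin m → ℝ))
        rw [hgv]
        exact hre
      · obtain ⟨y, hyP, hyeq⟩ := hrep _ him
        have hhv : h v = φ y := by
          rw [← hyeq]
          funext i
          simp only [hh, ← hz' i, Complex.norm_exp, hφ]
          rw [Complex.ofReal_exp, ← Complex.exp_sub]
          congr 1
          have h3 := Complex.re_add_im (z i)
          linear_combination -h3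
        show h v ∈ K
        rw [hhv, hK]
        exact ⟨y, hyP, rfl⟩
    · rintro ⟨hgv, hhv⟩
      obtain ⟨y, hyP, hyeq⟩ := hhv
      refine ⟨fun i => (g v i : ℂ) + (y i : ℂ) * Complex.I, ⟨?_, ?_⟩, ?_⟩
      · show (fun i => ((g v i : ℂ) + (y i : ℂ) * Complex.I).re) ∈ W
        have : (fun i => ((g v i : ℂ) + (y i : ℂ) * Complex.I).re) = g v := by
          funext i; simp
        rw [this]
        exact hgv
      · show (fun i => ((g v i : ℂ) + (y i : ℂ) * Complex.I).im) ∈ W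
        have : (fun i => ((g v i : ℂ) + (y i : ℂ) * Complex.I).im) = y := by
          funext i; simp
        rw [this]
        exact hPW hyP
      · funext i
        show Complex.exp ((g v i : ℂ) + (y i : ℂ) * Complex.I) = v.1 i
        rw [Complex.exp_add]
        have hA : ((‖v.1 i‖ : ℝ) : ℂ) ≠ 0 := by
          simpa using v.2 i
        have h1 : Complex.exp ((g v i : ℂ)) = ((‖v.1 i‖ : ℝ) : ℂ) := by
          rw [← Complex.ofReal_exp]
          norm_cast
          exact Real.exp_log (norm_pos_iff.mpr (v.2 i))
        have h2 : Complex.exp ((y i : ℂ) * Complex.I) = v.1 i / (‖v.1 i‖ : ℂ) := by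
          have h4 := congrFun hyeq i
          simpa [hφ, hh] using h4
        rw [h1, h2]
        field_simp
  rw [hset]
  exact ((Submodule.closed_of_finiteDimensional W).preimage hgcont).inter
    (hKcomp.isClosed.preimage hhcont)
end
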